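/- arXiv:1702.04831 — 5 statements merged into one kernel-verified Lean document; each statement's English description precedes it below -/
import Mathlib

section
/- The ring B_r/J_r is an integrally closed domain (i.e., it is a domain that is integrally closed in its field of fractions). -/
open MvPolynomial

/-- The ideal `J_r ⊆ B_r = k[X_0,…,X_{r-1},Y_0,…,Y_{r-1}]` generated by the elements
`X_ℓ·Y_{ℓ'} − X_{ℓ'}·Y_ℓ` for `0 ≤ ℓ < ℓ' < r`; `Sum.inl ℓ` is `X_ℓ` and `Sum.inr ℓ` is `Y_ℓ`. -/
noncomputable def Jideal (k : Type*) [CommRing k] (r : ℕ) :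
    Ideal (MvPolynomial (Fin r ⊕ Fin r) k) :=
  Ideal.span { f | ∃ ℓ ℓ' : Fin r, ℓ < ℓ' ∧
    f = X (Sum.inl ℓ) * X (Sum.inr ℓ') - X (Sum.inl ℓ') * X (Sum.inr ℓ) }

namespace SegreAux

variable (k : Type*) [Field k] (r : ℕ)

/-- The target polynomial ring `k[z_0,…,z_{r-1},t,s]`; `Sum.inl i = z_i`,
`Sum.inr true = s`, `Sum.inr false = t`. -/
abbrev T := MvPolynomial (Fin r ⊕ Bool) k

/-- The map `B → T`, `X_i ↦ s z_i`, `Y_i ↦ t z_i`. -/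
noncomputable def phi : MvPolynomial (Fin r ⊕ Fin r) k →ₐ[k] T k r :=
  aeval (Sum.elim (fun i => X (Sum.inr true) * X (Sum.inl i))
                  (fun i => X (Sum.inr false) * X (Sum.inl i)))

/-- The induced map on exponents. -/
noncomputable def psi {r : ℕ} (d : (Fin r ⊕ Fin r) →₀ ℕ) : (Fin r ⊕ Bool) →₀ ℕ :=
  Finsupp.equivFunOnFinite.symm (Sum.elim (fun i => d (Sum.inl i) + d (Sum.inr i))
    (fun b => if b then ∑ i, d (Sum.inl i) else ∑ i, d (Sum.inr i)))

variable {k r}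

lemma psi_inl (d : (Fin r ⊕ Fin r) →₀ ℕ) (i : Fin r) :
    psi d (Sum.inl i) = d (Sum.inl i) + d (Sum.inr i) := by
  simp [psi]

lemma psi_true (d : (Fin r ⊕ Fin r) →₀ ℕ) :
    psi d (Sum.inr true) = ∑ i, d (Sum.inl i) := by
  simp [psi]

lemma psi_false (d : (Fin r ⊕ Fin r) →₀ ℕ) :
    psi d (Sum.inr false) = ∑ i, d (Sum.inr i) := by
  simp [psi]

lemma phi_monomial (d : (Fin r ⊕ Fin r) →₀ ℕ) (c : k) :
    phi k r (monomial d c) = monomial (psi d) c := by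
  classical
  rw [phi, aeval_monomial, monomial_eq, algebraMap_eq]
  congr 1
  rw [Finsupp.prod_fintype _ _ (fun v => pow_zero _),
    Finsupp.prod_fintype _ _ (fun v => pow_zero _),
    Fintype.prod_sum_type, Fintype.prod_sum_type]
  simp only [Sum.elim_inl, Sum.elim_inr, mul_pow, Finset.prod_mul_distrib,
    Finset.prod_pow_eq_pow_sum, psi_inl, psi_true, psi_false, pow_add, Fintype.prod_bool]
  ring

/-- The weight function `z_i ↦ -1`, `s, t ↦ 1`. -/
def w : (Fin r ⊕ Bool) → ℤ := Sum.elim (fun _ => -1) (fun _ => 1)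

lemma weight_psi (d : (Fin r ⊕ Fin r) →₀ ℕ) : Finsupp.weight w (psi d) = 0 := by
  rw [Finsupp.weight_apply, Finsupp.sum_fintype _ _ (fun v => by simp)]
  simp only [Fintype.sum_sum_type, Fintype.sum_bool, psi_inl, psi_true, psi_false, w,
    Sum.elim_inl, Sum.elim_inr, smul_eq_mul, nsmul_eq_mul]
  push_cast
  simp only [mul_neg_one, mul_one, Finset.sum_neg_distrib, Finset.sum_add_distrib]
  ring

lemma psi_add (a b : (Fin r ⊕ Fin r) →₀ ℕ) : psi (a + b) = psi a + psi b := by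
  ext v
  rcases v with l | b'
  · simp only [Finsupp.add_apply, psi_inl]; ring
  · rcases b' <;>
      simp [psi_true, psi_false, Finsupp.add_apply, Finset.sum_add_distrib]

/-- Monomials with equal `psi` are congruent mod `J`. -/
lemma monomial_sub_monomial_mem {d d' : (Fin r ⊕ Fin r) →₀ ℕ} (h : psi d = psi d') :
    (monomial d (1 : k)) - monomial d' 1 ∈ Jideal k r := by
  classical
  generalize hn : (∑ i : Fin r, ((d (Sum.inl i) : ℤ) - (d' (Sum.inl i) : ℤ)).natAbs) = n
  induction n using Nat.strong_induction_on generalizing d d' with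
  | _ n IH =>
  by_cases hdd : ∀ i : Fin r, d (Sum.inl i) = d' (Sum.inl i)
  · have hdeq : d = d' := by
      ext v
      rcases v with l | l
      · exact hdd l
      · have h1 := congrArg (fun e => e (Sum.inl l)) h
        simp only [psi_inl] at h1
        have := hdd l
        omega
    rw [hdeq, sub_self]
    exact zero_mem _
  · push_neg at hdd
    obtain ⟨i0, hi0⟩ := hdd
    have hsum : ∑ l, d (Sum.inl l) = ∑ l, d' (Sum.inl l) := by
      have := congrArg (fun e => e (Sum.inr true)) h
      simpa [psi_true] using this
    have hex1 : ∃ i, d' (Sum.inl i) < d (Sum.inl i) := by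
      by_contra hc
      push_neg at hc
      rcases lt_or_gt_of_ne hi0 with h0 | h0
      · exact absurd hsum (Finset.sum_lt_sum (fun l _ => hc l) ⟨i0, Finset.mem_univ _, h0⟩).ne
      · exact absurd (hc i0) (not_le.mpr h0)
    have hex2 : ∃ j, d (Sum.inl j) < d' (Sum.inl j) := by
      by_contra hc
      push_neg at hc
      rcases lt_or_gt_of_ne hi0 with h0 | h0
      · exact absurd (hc i0) (not_le.mpr h0)
      · exact absurd hsum.symm (Finset.sum_lt_sum (fun l _ => hc l) ⟨i0, Finset.mem_univ _, h0⟩).ne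
    obtain ⟨i, hi⟩ := hex1
    obtain ⟨j, hj⟩ := hex2
    have hij : i ≠ j := by
      intro hEq; rw [hEq] at hi; omega
    have hai : 1 ≤ d (Sum.inl i) := by omega
    have hbj : 1 ≤ d (Sum.inr j) := by
      have h1 := congrArg (fun e => e (Sum.inl j)) h
      simp only [psi_inl] at h1
      omega
    -- the intermediate exponent
    set e : (Fin r ⊕ Fin r) →₀ ℕ := Finsupp.equivFunOnFinite.symm
      (fun v => if v = Sum.inl i ∨ v = Sum.inr j then d v - 1 else d v) with he
    have heval : ∀ v, e v = if v = Sum.inl i ∨ v = Sum.inr j then d v - 1 else d v := by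
      intro v; simp [he]
    have hd : d = e + (Finsupp.single (Sum.inl i) 1 + Finsupp.single (Sum.inr j) 1) := by
      ext v
      simp only [Finsupp.add_apply, heval, Finsupp.single_apply]
      by_cases h1 : v = Sum.inl i
      · subst h1; simp [hij]; omega
      · by_cases h2 : v = Sum.inr j
        · subst h2; simp [Ne.symm h1]; omega
        · simp [h1, h2, Ne.symm h1, Ne.symm h2]
    set d₂ : (Fin r ⊕ Fin r) →₀ ℕ :=
      e + (Finsupp.single (Sum.inl j) 1 + Finsupp.single (Sum.inr i) 1) with hd₂
    have hpsingle : psi (Finsupp.single (Sum.inl i) 1 + Finsupp.single (Sum.inr j) 1)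
        = psi (Finsupp.single (Sum.inl j) 1 + Finsupp.single (Sum.inr i) 1 :
            (Fin r ⊕ Fin r) →₀ ℕ) := by
      ext v
      rcases v with l | b'
      · simp only [psi_inl, Finsupp.add_apply, Finsupp.single_apply]
        by_cases h1 : l = i <;> by_cases h2 : l = j
        · exact absurd (h1.symm.trans h2) hij
        · subst h1; simp [Ne.symm hij, hij]
        · subst h2; simp [Ne.symm hij, hij]
        · simp [h1, h2, (Ne.symm h1 : i ≠ l), (Ne.symm h2 : j ≠ l)]
      · rcases b' <;>
          simp [psi_true, psi_false, Finsupp.add_apply, Finsupp.single_apply,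
            Finset.sum_add_distrib, Finset.sum_ite_eq', Sum.inl.injEq, Sum.inr.injEq]
    have hpsi2 : psi d₂ = psi d := by
      rw [hd₂, psi_add, ← hpsingle, ← psi_add, ← hd]
    have hd₂val : ∀ v, d₂ v = (e v) + ((if Sum.inl j = v then 1 else 0)
        + (if Sum.inr i = v then 1 else 0)) := by
      intro v
      simp [hd₂, Finsupp.single_apply]
    -- step 1 : monomial d - monomial d₂ ∈ J
    have hgen : (X (Sum.inl i) * X (Sum.inr j) - X (Sum.inl j) * X (Sum.inr i) :
        MvPolynomial (Fin r ⊕ Fin r) k) ∈ Jideal k r := by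
      rcases lt_or_gt_of_ne hij with h0 | h0
      · exact Ideal.subset_span ⟨i, j, h0, rfl⟩
      · have : (X (Sum.inl i) * X (Sum.inr j) - X (Sum.inl j) * X (Sum.inr i) :
            MvPolynomial (Fin r ⊕ Fin r) k)
            = -(X (Sum.inl j) * X (Sum.inr i) - X (Sum.inl i) * X (Sum.inr j)) := by ring
        rw [this]
        exact neg_mem (Ideal.subset_span ⟨j, i, h0, rfl⟩)
    have hstep1 : (monomial d (1 : k)) - monomial d₂ 1 ∈ Jideal k r := by
      have hXmon : ∀ (a b : Fin r ⊕ Fin r),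
          (X a * X b : MvPolynomial (Fin r ⊕ Fin r) k)
            = monomial (Finsupp.single a 1 + Finsupp.single b 1) 1 := by
        intro a b
        rw [X, X, monomial_mul, one_mul]
      have : (monomial d (1 : k)) - monomial d₂ 1
          = monomial e 1 * (X (Sum.inl i) * X (Sum.inr j)
              - X (Sum.inl j) * X (Sum.inr i)) := by
        rw [mul_sub, hXmon, hXmon, monomial_mul, monomial_mul, one_mul, hd₂, hd]
      rw [this]
      exact Ideal.mul_mem_left _ _ hgen
    -- step 2 : monomial d₂ - monomial d' ∈ J by induction
    have hmeas : (∑ l : Fin r, ((d₂ (Sum.inl l) : ℤ) - (d' (Sum.inl l) : ℤ)).natAbs) < n := by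
      subst hn
      refine Finset.sum_lt_sum ?_ ⟨i, Finset.mem_univ _, ?_⟩
      · intro l _
        have h2v := hd₂val (Sum.inl l)
        have hev := heval (Sum.inl l)
        by_cases h1 : l = i
        · subst h1
          simp [(Ne.symm hij : j ≠ l)] at h2v hev
          omega
        · by_cases h2 : l = j
          · subst h2
            simp [h1] at h2v hev
            omega
          · simp [h1, h2, (Ne.symm h1 : i ≠ l), (Ne.symm h2 : j ≠ l)] at h2v hev
            omega
      · have h2v := hd₂val (Sum.inl i)
        have hev := heval (Sum.inl i)
        simp [(Ne.symm hij : j ≠ i)] at h2v hev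
        omega
    have hstep2 : (monomial d₂ (1 : k)) - monomial d' 1 ∈ Jideal k r :=
      IH _ hmeas (hpsi2.trans h) rfl
    have : (monomial d (1 : k)) - monomial d' 1
        = ((monomial d (1 : k)) - monomial d₂ 1) + ((monomial d₂ (1 : k)) - monomial d' 1) := by
      ring
    rw [this]
    exact add_mem hstep1 hstep2

lemma J_le_ker : Jideal k r ≤ RingHom.ker (phi k r : _ →+* T k r) := by
  rw [Jideal, Ideal.span_le]
  rintro f ⟨l, l', hl, rfl⟩
  simp only [SetLike.mem_coe, RingHom.mem_ker, RingHom.coe_coe, map_sub, map_mul]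
  simp only [phi, aeval_X, Sum.elim_inl, Sum.elim_inr]
  ring

lemma coeff_phi (p : MvPolynomial (Fin r ⊕ Fin r) k) (e : (Fin r ⊕ Bool) →₀ ℕ) :
    coeff e (phi k r p) = ∑ d ∈ p.support, if psi d = e then coeff d p else 0 := by
  classical
  conv_lhs => rw [p.as_sum, map_sum]
  rw [coeff_sum]
  exact Finset.sum_congr rfl fun d _ => by rw [phi_monomial, coeff_monomial]

lemma ker_le_J_aux (n : ℕ) : ∀ p : MvPolynomial (Fin r ⊕ Fin r) k,
    phi k r p = 0 → p.support.card ≤ n → p ∈ Jideal k r := by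
  classical
  induction n with
  | zero =>
    intro p _ hcard
    have : p.support = ∅ := Finset.card_eq_zero.mp (Nat.le_zero.mp hcard)
    rw [show p = 0 from MvPolynomial.support_eq_empty.mp this]
    exact zero_mem _
  | succ n IH =>
    intro p hp hcard
    by_cases hp0 : p = 0
    · rw [hp0]; exact zero_mem _
    · obtain ⟨d, hd⟩ := MvPolynomial.support_nonempty.mpr hp0
      set Cls : Finset ((Fin r ⊕ Fin r) →₀ ℕ) :=
        p.support.filter (fun d' => psi d' = psi d) with hCls
      have hdCls : d ∈ Cls := Finset.mem_filter.mpr ⟨hd, rfl⟩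
      have hsum0 : ∑ d' ∈ Cls, coeff d' p = 0 := by
        have h0 : coeff (psi d) (phi k r p) = 0 := by rw [hp, coeff_zero]
        rw [coeff_phi, ← Finset.sum_filter] at h0
        exact h0
      set jelt : MvPolynomial (Fin r ⊕ Fin r) k :=
        ∑ d' ∈ Cls, C (coeff d' p) * (monomial d' 1 - monomial d 1) with hjelt
      have hjmem : jelt ∈ Jideal k r := by
        refine Ideal.sum_mem _ fun d' hd' => Ideal.mul_mem_left _ _ ?_
        exact monomial_sub_monomial_mem (Finset.mem_filter.mp hd').2
      have hjval : jelt = ∑ d' ∈ Cls, monomial d' (coeff d' p) := by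
        rw [hjelt]
        have h0 : (∑ d' ∈ Cls, C (coeff d' p) : MvPolynomial (Fin r ⊕ Fin r) k) = 0 := by
          rw [← map_sum C, hsum0, map_zero]
        calc ∑ d' ∈ Cls, C (coeff d' p) * (monomial d' 1 - monomial d 1)
            = (∑ d' ∈ Cls, C (coeff d' p) * monomial d' 1)
              - (∑ d' ∈ Cls, C (coeff d' p)) * monomial d 1 := by
              rw [Finset.sum_mul, ← Finset.sum_sub_distrib]
              exact Finset.sum_congr rfl fun d' _ => by ring
          _ = ∑ d' ∈ Cls, monomial d' (coeff d' p) := by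
              rw [h0, zero_mul, sub_zero]
              exact Finset.sum_congr rfl fun d' _ => by rw [C_mul_monomial, mul_one]
      set q : MvPolynomial (Fin r ⊕ Fin r) k := p - jelt with hq
      have hq0 : phi k r q = 0 := by
        rw [hq, map_sub, hp, zero_sub, neg_eq_zero]
        exact J_le_ker hjmem
      have hqcoeff : ∀ x, coeff x q = coeff x p - (if x ∈ Cls then coeff x p else 0) := by
        intro x
        rw [hq, hjval]
        simp [coeff_sub, coeff_sum, coeff_monomial, Finset.sum_ite_eq']
      have hsub : q.support ⊆ p.support \ Cls := by
        intro x hx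
        rw [MvPolynomial.mem_support_iff] at hx
        rw [hqcoeff x] at hx
        by_cases hxC : x ∈ Cls
        · simp [hxC] at hx
        · rw [if_neg hxC, sub_zero] at hx
          exact Finset.mem_sdiff.mpr ⟨MvPolynomial.mem_support_iff.mpr hx, hxC⟩
      have hcard' : q.support.card ≤ n := by
        have h1 := Finset.card_le_card hsub
        rw [Finset.card_sdiff_of_subset (Finset.filter_subset _ _), ← hCls] at h1
        have h2 : 1 ≤ Cls.card := Finset.card_pos.mpr ⟨d, hdCls⟩
        omega
      have hqJ : q ∈ Jideal k r := IH q hq0 hcard'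
      have : p = q + jelt := by rw [hq]; ring
      rw [this]
      exact add_mem hqJ hjmem

lemma ker_le_J : RingHom.ker (phi k r : _ →+* T k r) ≤ Jideal k r := by
  intro p hp
  exact ker_le_J_aux p.support.card p (by rwa [RingHom.mem_ker] at hp) le_rfl

lemma weight_eval (e : (Fin r ⊕ Bool) →₀ ℕ) :
    Finsupp.weight w e = ((e (Sum.inr true) : ℤ) + e (Sum.inr false))
      - ∑ i, (e (Sum.inl i) : ℤ) := by
  rw [Finsupp.weight_apply, Finsupp.sum_fintype _ _ (fun v => by simp)]
  simp only [Fintype.sum_sum_type, Fintype.sum_bool, w, Sum.elim_inl, Sum.elim_inr,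
    smul_eq_mul, nsmul_eq_mul]
  push_cast
  simp only [mul_neg_one, mul_one, Finset.sum_neg_distrib]
  ring

lemma weight_single (v : Fin r ⊕ Bool) (m : ℕ) :
    Finsupp.weight w (Finsupp.single v m) = m • w v := by
  rw [Finsupp.weight_apply, Finsupp.sum_single_index (by simp)]

lemma monomial_mem_range_aux (N : ℕ) : ∀ (e : (Fin r ⊕ Bool) →₀ ℕ) (c : k),
    Finsupp.weight w e = 0 → e (Sum.inr true) + e (Sum.inr false) ≤ N →
    monomial e c ∈ Set.range (phi k r) := by
  classical
  induction N with
  | zero =>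
    intro e c hw hN
    have hz : ∑ i, (e (Sum.inl i) : ℤ) = 0 := by
      rw [weight_eval] at hw
      omega
    have he : e = 0 := by
      ext v
      rcases v with i | b
      · have : ∀ i ∈ Finset.univ, (e (Sum.inl i) : ℤ) = 0 :=
          (Finset.sum_eq_zero_iff_of_nonneg (fun i _ => by positivity)).mp hz
        have := this i (Finset.mem_univ i)
        simpa using this
      · rcases b <;> simp <;> omega
    rw [he]
    exact ⟨C c, by simp [phi, aeval_C, algebraMap_eq, monomial_zero']⟩
  | succ N IH =>
    intro e c hw hN
    by_cases h0 : e (Sum.inr true) + e (Sum.inr false) = 0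
    · exact IH e c hw (by omega)
    · -- pick b with e (inr b) > 0
      have hb' : ∃ b : Bool, 0 < e (Sum.inr b) := by
        rcases Nat.pos_of_ne_zero h0 with _
        by_cases ht : 0 < e (Sum.inr true)
        · exact ⟨true, ht⟩
        · exact ⟨false, by omega⟩
      obtain ⟨b, hb⟩ := hb'
      have hzsum : 0 < ∑ i, (e (Sum.inl i) : ℤ) := by
        rw [weight_eval] at hw
        rcases b <;> omega
      have hi' : ∃ i, 0 < e (Sum.inl i) := by
        by_contra hc
        push_neg at hc
        have : ∑ i, (e (Sum.inl i) : ℤ) = 0 :=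
          Finset.sum_eq_zero fun i _ => by have := hc i; omega
        omega
      obtain ⟨i, hi⟩ := hi'
      set e' : (Fin r ⊕ Bool) →₀ ℕ := Finsupp.equivFunOnFinite.symm
        (fun v => if v = Sum.inr b ∨ v = Sum.inl i then e v - 1 else e v) with he'
      have he'val : ∀ v, e' v = if v = Sum.inr b ∨ v = Sum.inl i then e v - 1 else e v := by
        intro v; simp [he']
      have hsplit : e = e' + (Finsupp.single (Sum.inr b) 1 + Finsupp.single (Sum.inl i) 1) := by
        ext v
        simp only [Finsupp.add_apply, he'val, Finsupp.single_apply]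
        by_cases h1 : v = Sum.inr b
        · subst h1; simp; omega
        · by_cases h2 : v = Sum.inl i
          · subst h2; simp [h1, Ne.symm h1]; omega
          · simp [h1, h2, Ne.symm h1, Ne.symm h2]
      have hw' : Finsupp.weight w e' = 0 := by
        have h := congrArg (Finsupp.weight w) hsplit
        rw [hw, map_add, map_add, weight_single, weight_single, one_smul, one_smul,
          show w (Sum.inr b) = 1 from rfl, show w (Sum.inl i) = -1 from rfl] at h
        omega
      have hN' : e' (Sum.inr true) + e' (Sum.inr false) ≤ N := by
        have h1 := he'val (Sum.inr true)
        have h2 := he'val (Sum.inr false)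
        rcases b <;> simp at h1 h2 <;> omega
      obtain ⟨u, hu⟩ := IH e' c hw' hN'
      refine ⟨u * (if b then X (Sum.inl i) else X (Sum.inr i)), ?_⟩
      rw [map_mul, hu]
      have hXX : ∀ (a a' : Fin r ⊕ Bool),
          (X a * X a' : T k r) = monomial (Finsupp.single a 1 + Finsupp.single a' 1) 1 :=
        fun a a' => by rw [X, X, monomial_mul, one_mul]
      have hgen : phi k r (if b then X (Sum.inl i) else X (Sum.inr i))
          = monomial (Finsupp.single (Sum.inr b) 1 + Finsupp.single (Sum.inl i) 1) 1 := by
        rcases b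
        · show phi k r (X (Sum.inr i)) = _
          rw [phi, aeval_X, Sum.elim_inr, hXX]
        · show phi k r (X (Sum.inl i)) = _
          rw [phi, aeval_X, Sum.elim_inl, hXX]
      rw [hgen, monomial_mul, mul_one, ← hsplit]

/-- The range of `phi` is exactly the weight-`0` part of `T`. -/
lemma mem_range_iff (q : T k r) :
    q ∈ Set.range (phi k r) ↔ q.IsWeightedHomogeneous w 0 := by
  classical
  constructor
  · rintro ⟨p, rfl⟩
    have h1 : phi k r p = ∑ d ∈ p.support, monomial (psi d) (coeff d p) := by
      conv_lhs => rw [p.as_sum]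
      rw [map_sum]
      exact Finset.sum_congr rfl fun d _ => phi_monomial d _
    rw [← mem_weightedHomogeneousSubmodule, h1]
    refine Submodule.sum_mem _ fun d _ => ?_
    rw [mem_weightedHomogeneousSubmodule]
    exact isWeightedHomogeneous_monomial _ _ _ (weight_psi d)
  · intro hq
    have : ∀ d ∈ q.support, monomial d (coeff d q) ∈ Set.range (phi k r) := by
      intro d hd
      exact monomial_mem_range_aux (d (Sum.inr true) + d (Sum.inr false)) d _
        (hq (MvPolynomial.mem_support_iff.mp hd)) le_rfl
    -- range of a ring hom is closed under sums
    have hsub : ∀ (s : Finset ((Fin r ⊕ Bool) →₀ ℕ)) (f : ((Fin r ⊕ Bool) →₀ ℕ) → T k r),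
        (∀ d ∈ s, f d ∈ Set.range (phi k r)) → (∑ d ∈ s, f d) ∈ Set.range (phi k r) := by
      intro s
      induction s using Finset.induction with
      | empty => intro f _; exact ⟨0, by simp⟩
      | insert _ _ hx IH =>
        intro f hf
        rw [Finset.sum_insert hx]
        obtain ⟨u, hu⟩ := hf _ (Finset.mem_insert_self _ _)
        obtain ⟨v, hv⟩ := IH f (fun d hd => hf d (Finset.mem_insert_of_mem hd))
        exact ⟨u + v, by rw [map_add, hu, hv]⟩
    have hfin := hsub q.support (fun d => monomial d (coeff d q)) this
    rwa [← q.as_sum] at hfin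

set_option maxHeartbeats 1000000 in
lemma comp_mul (t : T k r) {b : T k r} (hb : b.IsWeightedHomogeneous w 0) (n : ℤ) :
    weightedHomogeneousComponent w n (t * b)
      = weightedHomogeneousComponent w n t * b := by
  classical
  have hfin : (Function.support fun m => weightedHomogeneousComponent w m t).Finite :=
    weightedHomogeneousComponent_finsupp t
  have ht : t = ∑ m ∈ hfin.toFinset, weightedHomogeneousComponent w m t := by
    conv_lhs => rw [← sum_weightedHomogeneousComponent w t]
    exact finsum_eq_sum _ hfin
  have hwh : ∀ m : ℤ, (weightedHomogeneousComponent w m t * b).IsWeightedHomogeneous w m :=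
    fun m => by
      have h := (weightedHomogeneousComponent_isWeightedHomogeneous m t).mul hb
      rwa [add_zero] at h
  conv_lhs => rw [ht, Finset.sum_mul, map_sum]
  rw [Finset.sum_eq_single n]
  · exact (hwh n).weightedHomogeneousComponent_same
  · intro m _ hmn
    exact (hwh m).weightedHomogeneousComponent_ne n hmn.symm
  · intro hn
    rw [Set.Finite.mem_toFinset, Function.mem_support, not_not] at hn
    rw [hn, zero_mul, map_zero]

lemma homog_of_mul {b t : T k r} (hb : b.IsWeightedHomogeneous w 0) (hb0 : b ≠ 0)
    (htb : (t * b).IsWeightedHomogeneous w 0) : t.IsWeightedHomogeneous w 0 := by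
  classical
  have key : ∀ n : ℤ, n ≠ 0 → weightedHomogeneousComponent w n t = 0 := by
    intro n hn
    have hcomp : weightedHomogeneousComponent w n t * b = 0 := by
      rw [← comp_mul t hb n, htb.weightedHomogeneousComponent_ne n hn]
    rcases mul_eq_zero.mp hcomp with h | h
    · exact h
    · exact absurd h hb0
  have ht0 : t = weightedHomogeneousComponent w 0 t := by
    conv_lhs => rw [← sum_weightedHomogeneousComponent w t]
    exact finsum_eq_single _ 0 key
  rw [ht0]
  exact weightedHomogeneousComponent_isWeightedHomogeneous 0 t

end SegreAux

set_option maxHeartbeats 1000000 in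
set_option synthInstance.maxHeartbeats 400000 in
/-- The ring `B_r/J_r` is an integrally closed integral domain. -/
theorem stmt_2 (k : Type*) [Field k] [IsAlgClosed k] (p : ℕ) (hp : p.Prime)
    (hp2 : 2 < p) [CharP k p] (r : ℕ) (hr : 1 ≤ r) :
    IsDomain (MvPolynomial (Fin r ⊕ Fin r) k ⧸ Jideal k r) ∧
    IsIntegrallyClosed (MvPolynomial (Fin r ⊕ Fin r) k ⧸ Jideal k r) := by
  classical
  set Q := MvPolynomial (Fin r ⊕ Fin r) k ⧸ Jideal k r with hQ
  let f : MvPolynomial (Fin r ⊕ Fin r) k →+* SegreAux.T k r := (SegreAux.phi k r : _ →+* _)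
  have hker : Jideal k r = RingHom.ker f :=
    le_antisymm SegreAux.J_le_ker SegreAux.ker_le_J
  let e : Q ≃+* f.range :=
    (Ideal.quotEquivOfEq hker).trans (RingHom.quotientKerEquivRange f)
  let g : Q →+* SegreAux.T k r := f.range.subtype.comp e.toRingHom
  have hginj : Function.Injective g :=
    fun a b hab => e.injective (Subtype.coe_injective hab)
  haveI hdom : IsDomain Q := Function.Injective.isDomain g hginj
  have hrange : ∀ x : SegreAux.T k r,
      (∃ q : Q, g q = x) ↔ x ∈ Set.range (SegreAux.phi k r) := by
    intro x
    constructor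
    · rintro ⟨q, rfl⟩
      obtain ⟨p, hp⟩ := RingHom.mem_range.mp (e q).2
      exact ⟨p, hp⟩
    · rintro ⟨p, rfl⟩
      refine ⟨e.symm ⟨SegreAux.phi k r p, RingHom.mem_range.mpr ⟨p, rfl⟩⟩, ?_⟩
      show (f.range.subtype) (e (e.symm _)) = _
      rw [RingEquiv.apply_symm_apply]
      rfl
  refine ⟨hdom, ?_⟩
  -- integrally closed
  let L := FractionRing (SegreAux.T k r)
  let gL : Q →+* L := (algebraMap (SegreAux.T k r) L).comp g
  have hgLinj : Function.Injective gL := by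
    have h := Function.Injective.comp (IsFractionRing.injective (SegreAux.T k r) L) hginj
    simpa [gL, RingHom.coe_comp] using h
  let j : FractionRing Q →+* L := IsFractionRing.lift hgLinj
  have hjmap : ∀ q : Q, j (algebraMap Q (FractionRing Q) q) = gL q := fun q =>
    IsFractionRing.lift_algebraMap hgLinj q
  apply (isIntegrallyClosed_iff (FractionRing Q)).mpr
  intro x hx
  obtain ⟨P, hPmonic, hPeval⟩ := hx
  have hcomp : (algebraMap (SegreAux.T k r) L).comp g
      = j.comp (algebraMap Q (FractionRing Q)) :=
    RingHom.ext fun q => by simp only [RingHom.comp_apply, hjmap]; rfl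
  have hjx_int : IsIntegral (SegreAux.T k r) (j x) := by
    refine ⟨P.map g, hPmonic.map g, ?_⟩
    rw [Polynomial.eval₂_map, hcomp, ← Polynomial.hom_eval₂, hPeval, map_zero]
  haveI : IsIntegrallyClosed (SegreAux.T k r) :=
    UniqueFactorizationMonoid.instIsIntegrallyClosed
  obtain ⟨t, ht⟩ := IsIntegrallyClosed.isIntegral_iff.mp hjx_int
  obtain ⟨⟨a, b⟩, hab⟩ := IsLocalization.surj (nonZeroDivisors Q) x
  have hab' : j x * gL b = gL a := by
    have := congrArg j hab
    rw [map_mul, hjmap, hjmap] at this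
    exact this
  have hteq : t * g b = g a := by
    apply IsFractionRing.injective (SegreAux.T k r) L
    rw [map_mul, ht]
    exact hab'
  have hga : (g a).IsWeightedHomogeneous SegreAux.w 0 :=
    (SegreAux.mem_range_iff _).mp ((hrange _).mp ⟨a, rfl⟩)
  have hgb : ((g b : SegreAux.T k r)).IsWeightedHomogeneous SegreAux.w 0 :=
    (SegreAux.mem_range_iff _).mp ((hrange _).mp ⟨b, rfl⟩)
  have hgb0 : (g b : SegreAux.T k r) ≠ 0 := by
    intro h0
    have hb0 : (b : Q) = 0 := hginj (by rw [h0, map_zero])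
    exact nonZeroDivisors.coe_ne_zero b hb0
  have hth : t.IsWeightedHomogeneous SegreAux.w 0 :=
    SegreAux.homog_of_mul hgb hgb0 (by rw [hteq]; exact hga)
  obtain ⟨q, hq⟩ := (hrange t).mpr ((SegreAux.mem_range_iff t).mpr hth)
  refine ⟨q, ?_⟩
  have hjinj : Function.Injective j := j.injective
  apply hjinj
  rw [hjmap]
  show gL q = j x
  have : gL q = algebraMap (SegreAux.T k r) L t := by
    rw [show gL q = algebraMap (SegreAux.T k r) L (g q) from rfl, hq]
  rw [this, ht]
end

section
/- Fix any index ℓ₁ with 0 ≤ ℓ₁ < r. The localization of B_r/J_r away from the image of Y_{ℓ₁} is isomorphic as a k-algebra to the localization of the polynomial ring k[U_0,…,U_r] in r+1 variables away from the variable U_0. (Explicitly, after inverting Y_{ℓ₁}, the ring B_r/J_r becomes the polynomial ring on Y_0,…,Y_{r−1} and X_{ℓ₁} with Y_{ℓ₁} inverted, since X_ℓ = X_{ℓ₁}·Y_{ℓ₁}^{−1}·Y_ℓ for every ℓ.) -/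
open MvPolynomial

section Aux

variable (k : Type*) [CommRing k] (r : ℕ) (ℓ₁ : Fin r)

def sigmaMap : Fin r → Fin (r+1) := fun ℓ => if ℓ = ℓ₁ then 0 else ℓ.succ

noncomputable def U0inv : Localization.Away (X (0 : Fin (r+1)) : MvPolynomial (Fin (r+1)) k) :=
  IsLocalization.Away.invSelf (X (0 : Fin (r+1)) : MvPolynomial (Fin (r+1)) k)

lemma U0_mul_U0inv :
    algebraMap (MvPolynomial (Fin (r+1)) k) (Localization.Away (X (0 : Fin (r+1)) : MvPolynomial (Fin (r+1)) k)) (X (0 : Fin (r+1))) * U0inv k r = 1 :=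
  IsLocalization.Away.mul_invSelf _

noncomputable def fwd : MvPolynomial (Fin r ⊕ Fin r) k →ₐ[k] Localization.Away (X (0 : Fin (r+1)) : MvPolynomial (Fin (r+1)) k) :=
  aeval (Sum.elim
    (fun ℓ => algebraMap (MvPolynomial (Fin (r+1)) k) (Localization.Away (X (0 : Fin (r+1)) : MvPolynomial (Fin (r+1)) k)) (X (ℓ₁.succ) * X (sigmaMap r ℓ₁ ℓ)) * U0inv k r)
    (fun ℓ => algebraMap (MvPolynomial (Fin (r+1)) k) (Localization.Away (X (0 : Fin (r+1)) : MvPolynomial (Fin (r+1)) k)) (X (sigmaMap r ℓ₁ ℓ))))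

lemma fwd_vanish : ∀ a ∈ Jideal k r, fwd k r ℓ₁ a = 0 := by
  intro a ha
  have : Jideal k r ≤ RingHom.ker (fwd k r ℓ₁) := by
    rw [Jideal, Ideal.span_le]
    rintro f ⟨ℓ, ℓ', _, rfl⟩
    simp only [SetLike.mem_coe, RingHom.mem_ker, map_sub, map_mul, fwd, aeval_X, Sum.elim_inl,
      Sum.elim_inr]
    ring
  exact this ha

noncomputable def fwdQ : (MvPolynomial (Fin r ⊕ Fin r) k ⧸ Jideal k r) →ₐ[k] Localization.Away (X (0 : Fin (r+1)) : MvPolynomial (Fin (r+1)) k) :=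
  Ideal.Quotient.liftₐ (Jideal k r) (fwd k r ℓ₁) (fwd_vanish k r ℓ₁)

lemma fwdQ_mk (a : MvPolynomial (Fin r ⊕ Fin r) k) :
    fwdQ k r ℓ₁ (Ideal.Quotient.mk (Jideal k r) a) = fwd k r ℓ₁ a := rfl

lemma fwd_Xinr (ℓ : Fin r) :
    fwd k r ℓ₁ (X (Sum.inr ℓ)) = algebraMap (MvPolynomial (Fin (r+1)) k) (Localization.Away (X (0 : Fin (r+1)) : MvPolynomial (Fin (r+1)) k)) (X (sigmaMap r ℓ₁ ℓ)) := by
  simp [fwd]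

lemma fwd_Xinl (ℓ : Fin r) :
    fwd k r ℓ₁ (X (Sum.inl ℓ)) =
      algebraMap (MvPolynomial (Fin (r+1)) k) (Localization.Away (X (0 : Fin (r+1)) : MvPolynomial (Fin (r+1)) k)) (X (ℓ₁.succ) * X (sigmaMap r ℓ₁ ℓ)) * U0inv k r := by
  simp [fwd]

lemma fwdQ_y1_isUnit : IsUnit (fwdQ k r ℓ₁ ((Ideal.Quotient.mk (Jideal k r)) (X (Sum.inr ℓ₁) : MvPolynomial (Fin r ⊕ Fin r) k))) := by
  rw [fwdQ_mk, fwd_Xinr]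
  have : sigmaMap r ℓ₁ ℓ₁ = 0 := by simp [sigmaMap]
  rw [this]
  exact IsUnit.of_mul_eq_one _ (U0_mul_U0inv k r)

noncomputable def bwd : MvPolynomial (Fin (r+1)) k →ₐ[k] Localization.Away ((Ideal.Quotient.mk (Jideal k r)) (X (Sum.inr ℓ₁) : MvPolynomial (Fin r ⊕ Fin r) k)) :=
  aeval (Fin.cases
    (algebraMap (MvPolynomial (Fin r ⊕ Fin r) k ⧸ Jideal k r) (Localization.Away ((Ideal.Quotient.mk (Jideal k r)) (X (Sum.inr ℓ₁) : MvPolynomial (Fin r ⊕ Fin r) k))) ((Ideal.Quotient.mk (Jideal k r)) (X (Sum.inr ℓ₁))))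
    (fun ℓ => if ℓ = ℓ₁ then
      algebraMap (MvPolynomial (Fin r ⊕ Fin r) k ⧸ Jideal k r) (Localization.Away ((Ideal.Quotient.mk (Jideal k r)) (X (Sum.inr ℓ₁) : MvPolynomial (Fin r ⊕ Fin r) k))) ((Ideal.Quotient.mk (Jideal k r)) (X (Sum.inl ℓ₁)))
      else algebraMap (MvPolynomial (Fin r ⊕ Fin r) k ⧸ Jideal k r) (Localization.Away ((Ideal.Quotient.mk (Jideal k r)) (X (Sum.inr ℓ₁) : MvPolynomial (Fin r ⊕ Fin r) k))) ((Ideal.Quotient.mk (Jideal k r)) (X (Sum.inr ℓ)))))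

lemma bwd_X0 : bwd k r ℓ₁ (X (0 : Fin (r+1))) =
    algebraMap (MvPolynomial (Fin r ⊕ Fin r) k ⧸ Jideal k r) (Localization.Away ((Ideal.Quotient.mk (Jideal k r)) (X (Sum.inr ℓ₁) : MvPolynomial (Fin r ⊕ Fin r) k))) ((Ideal.Quotient.mk (Jideal k r)) (X (Sum.inr ℓ₁))) := by
  simp [bwd]

lemma bwd_Xsucc (ℓ : Fin r) : bwd k r ℓ₁ (X ℓ.succ) =
    (if ℓ = ℓ₁ then
      algebraMap (MvPolynomial (Fin r ⊕ Fin r) k ⧸ Jideal k r) (Localization.Away ((Ideal.Quotient.mk (Jideal k r)) (X (Sum.inr ℓ₁) : MvPolynomial (Fin r ⊕ Fin r) k))) ((Ideal.Quotient.mk (Jideal k r)) (X (Sum.inl ℓ₁)))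
      else algebraMap (MvPolynomial (Fin r ⊕ Fin r) k ⧸ Jideal k r) (Localization.Away ((Ideal.Quotient.mk (Jideal k r)) (X (Sum.inr ℓ₁) : MvPolynomial (Fin r ⊕ Fin r) k))) ((Ideal.Quotient.mk (Jideal k r)) (X (Sum.inr ℓ)))) := by
  have h := aeval_X (R := k) (Fin.cases
    (algebraMap (MvPolynomial (Fin r ⊕ Fin r) k ⧸ Jideal k r) (Localization.Away ((Ideal.Quotient.mk (Jideal k r)) (X (Sum.inr ℓ₁) : MvPolynomial (Fin r ⊕ Fin r) k))) ((Ideal.Quotient.mk (Jideal k r)) (X (Sum.inr ℓ₁))))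
    (fun ℓ => if ℓ = ℓ₁ then
      algebraMap (MvPolynomial (Fin r ⊕ Fin r) k ⧸ Jideal k r) (Localization.Away ((Ideal.Quotient.mk (Jideal k r)) (X (Sum.inr ℓ₁) : MvPolynomial (Fin r ⊕ Fin r) k))) ((Ideal.Quotient.mk (Jideal k r)) (X (Sum.inl ℓ₁)))
      else algebraMap (MvPolynomial (Fin r ⊕ Fin r) k ⧸ Jideal k r) (Localization.Away ((Ideal.Quotient.mk (Jideal k r)) (X (Sum.inr ℓ₁) : MvPolynomial (Fin r ⊕ Fin r) k))) ((Ideal.Quotient.mk (Jideal k r)) (X (Sum.inr ℓ))))) ℓ.succ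
  rw [Fin.cases_succ] at h
  exact h

lemma bwd_X0_isUnit : IsUnit (bwd k r ℓ₁ (X (0 : Fin (r+1)))) := by
  rw [bwd_X0]
  exact IsLocalization.Away.algebraMap_isUnit
    (S := Localization.Away ((Ideal.Quotient.mk (Jideal k r)) (X (Sum.inr ℓ₁) : MvPolynomial (Fin r ⊕ Fin r) k))) _

lemma powers_units {R T : Type*} [CommRing R] [CommRing T] [Algebra k R] [Algebra k T]
    (g : R →ₐ[k] T) (x : R) (hx : IsUnit (g x)) :
    ∀ y : Submonoid.powers x, IsUnit (g y) := by
  rintro ⟨y, n, rfl⟩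
  simpa [map_pow] using hx.pow n

noncomputable def Phi : Localization.Away ((Ideal.Quotient.mk (Jideal k r)) (X (Sum.inr ℓ₁) : MvPolynomial (Fin r ⊕ Fin r) k)) →ₐ[k] Localization.Away (X (0 : Fin (r+1)) : MvPolynomial (Fin (r+1)) k) :=
  IsLocalization.liftAlgHom (M := Submonoid.powers ((Ideal.Quotient.mk (Jideal k r)) (X (Sum.inr ℓ₁) : MvPolynomial (Fin r ⊕ Fin r) k))) (S := Localization.Away ((Ideal.Quotient.mk (Jideal k r)) (X (Sum.inr ℓ₁) : MvPolynomial (Fin r ⊕ Fin r) k))) (f := fwdQ k r ℓ₁)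
    (powers_units k (fwdQ k r ℓ₁) _ (fwdQ_y1_isUnit k r ℓ₁))

lemma bwd_units : ∀ y : Submonoid.powers (X (0 : Fin (r+1)) : MvPolynomial (Fin (r+1)) k),
    IsUnit (bwd k r ℓ₁ y) := by
  rintro ⟨y, n, rfl⟩
  simpa only [map_pow] using (bwd_X0_isUnit k r ℓ₁).pow n


noncomputable def Psi0 : Localization.Away (X (0 : Fin (r+1)) : MvPolynomial (Fin (r+1)) k) →+* Localization.Away ((Ideal.Quotient.mk (Jideal k r)) (X (Sum.inr ℓ₁) : MvPolynomial (Fin r ⊕ Fin r) k)) :=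
  IsLocalization.Away.lift (g := (bwd k r ℓ₁ : MvPolynomial (Fin (r+1)) k →+* Localization.Away ((Ideal.Quotient.mk (Jideal k r)) (X (Sum.inr ℓ₁) : MvPolynomial (Fin r ⊕ Fin r) k)))) (X (0 : Fin (r+1))) (bwd_X0_isUnit k r ℓ₁)

lemma Psi0_mk (a : MvPolynomial (Fin (r+1)) k) :
    Psi0 k r ℓ₁ (algebraMap (MvPolynomial (Fin (r+1)) k) (Localization.Away (X (0 : Fin (r+1)) : MvPolynomial (Fin (r+1)) k)) a) = bwd k r ℓ₁ a :=
  IsLocalization.Away.lift_eq _ _ _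

noncomputable def Psi : Localization.Away (X (0 : Fin (r+1)) : MvPolynomial (Fin (r+1)) k) →ₐ[k] Localization.Away ((Ideal.Quotient.mk (Jideal k r)) (X (Sum.inr ℓ₁) : MvPolynomial (Fin r ⊕ Fin r) k)) :=
  { Psi0 k r ℓ₁ with
    commutes' := fun c => by
      have h1 : (algebraMap k (Localization.Away (X (0 : Fin (r+1)) : MvPolynomial (Fin (r+1)) k))) c =
          algebraMap (MvPolynomial (Fin (r+1)) k) (Localization.Away (X (0 : Fin (r+1)) : MvPolynomial (Fin (r+1)) k))
            (algebraMap k (MvPolynomial (Fin (r+1)) k) c) :=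
        IsScalarTower.algebraMap_apply k (MvPolynomial (Fin (r+1)) k) _ c
      show Psi0 k r ℓ₁ _ = _
      rw [h1, Psi0_mk]
      exact (bwd k r ℓ₁).commutes c }

lemma Psi_mk (a : MvPolynomial (Fin (r+1)) k) :
    Psi k r ℓ₁ (algebraMap (MvPolynomial (Fin (r+1)) k) (Localization.Away (X (0 : Fin (r+1)) : MvPolynomial (Fin (r+1)) k)) a) = bwd k r ℓ₁ a :=
  Psi0_mk k r ℓ₁ a

lemma Phi_mk (q : (MvPolynomial (Fin r ⊕ Fin r) k ⧸ Jideal k r)) :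
    Phi k r ℓ₁ (algebraMap (MvPolynomial (Fin r ⊕ Fin r) k ⧸ Jideal k r) (Localization.Away ((Ideal.Quotient.mk (Jideal k r)) (X (Sum.inr ℓ₁) : MvPolynomial (Fin r ⊕ Fin r) k))) q) = fwdQ k r ℓ₁ q := by
  simp [Phi, IsLocalization.liftAlgHom_apply, IsLocalization.lift_eq]

lemma hom_ext_L {T : Type*} [CommRing T] [Algebra k T]
    (F G : Localization.Away (X (0 : Fin (r+1)) : MvPolynomial (Fin (r+1)) k) →ₐ[k] T)
    (h : ∀ i : Fin (r+1),
      F (algebraMap (MvPolynomial (Fin (r+1)) k) (Localization.Away (X (0 : Fin (r+1)) : MvPolynomial (Fin (r+1)) k)) (X i)) = G (algebraMap (MvPolynomial (Fin (r+1)) k) (Localization.Away (X (0 : Fin (r+1)) : MvPolynomial (Fin (r+1)) k)) (X i))) : F = G := by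
  have h2 : F.comp (IsScalarTower.toAlgHom k (MvPolynomial (Fin (r+1)) k) (Localization.Away (X (0 : Fin (r+1)) : MvPolynomial (Fin (r+1)) k))) =
      G.comp (IsScalarTower.toAlgHom k (MvPolynomial (Fin (r+1)) k) (Localization.Away (X (0 : Fin (r+1)) : MvPolynomial (Fin (r+1)) k))) :=
    MvPolynomial.algHom_ext fun i => h i
  apply AlgHom.coe_ringHom_injective
  apply IsLocalization.ringHom_ext (Submonoid.powers (X (0 : Fin (r+1)) : MvPolynomial (Fin (r+1)) k))
  exact RingHom.ext fun a => AlgHom.congr_fun h2 a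

lemma hom_ext_M {T : Type*} [CommRing T] [Algebra k T]
    (F G : Localization.Away ((Ideal.Quotient.mk (Jideal k r)) (X (Sum.inr ℓ₁) : MvPolynomial (Fin r ⊕ Fin r) k)) →ₐ[k] T)
    (h : ∀ i : Fin r ⊕ Fin r,
      F (algebraMap (MvPolynomial (Fin r ⊕ Fin r) k ⧸ Jideal k r) (Localization.Away ((Ideal.Quotient.mk (Jideal k r)) (X (Sum.inr ℓ₁) : MvPolynomial (Fin r ⊕ Fin r) k))) ((Ideal.Quotient.mk (Jideal k r)) (X i))) =
      G (algebraMap (MvPolynomial (Fin r ⊕ Fin r) k ⧸ Jideal k r) (Localization.Away ((Ideal.Quotient.mk (Jideal k r)) (X (Sum.inr ℓ₁) : MvPolynomial (Fin r ⊕ Fin r) k))) ((Ideal.Quotient.mk (Jideal k r)) (X i)))) : F = G := by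
  have h2 : (F.comp (IsScalarTower.toAlgHom k (MvPolynomial (Fin r ⊕ Fin r) k ⧸ Jideal k r) (Localization.Away ((Ideal.Quotient.mk (Jideal k r)) (X (Sum.inr ℓ₁) : MvPolynomial (Fin r ⊕ Fin r) k))))).comp
        (Ideal.Quotient.mkₐ k (Jideal k r)) =
      (G.comp (IsScalarTower.toAlgHom k (MvPolynomial (Fin r ⊕ Fin r) k ⧸ Jideal k r) (Localization.Away ((Ideal.Quotient.mk (Jideal k r)) (X (Sum.inr ℓ₁) : MvPolynomial (Fin r ⊕ Fin r) k))))).comp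
        (Ideal.Quotient.mkₐ k (Jideal k r)) :=
    MvPolynomial.algHom_ext fun i => h i
  have h3 := Ideal.Quotient.algHom_ext k h2
  apply AlgHom.coe_ringHom_injective
  exact IsLocalization.ringHom_ext (S := Localization.Away ((Ideal.Quotient.mk (Jideal k r)) (X (Sum.inr ℓ₁) : MvPolynomial (Fin r ⊕ Fin r) k))) (Submonoid.powers ((Ideal.Quotient.mk (Jideal k r)) (X (Sum.inr ℓ₁) : MvPolynomial (Fin r ⊕ Fin r) k))) (RingHom.ext fun a => AlgHom.congr_fun h3 a)

lemma mk_rel (ℓ : Fin r) :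
    (Ideal.Quotient.mk (Jideal k r)) (X (Sum.inl ℓ₁) * X (Sum.inr ℓ) : MvPolynomial (Fin r ⊕ Fin r) k) =
    (Ideal.Quotient.mk (Jideal k r)) (X (Sum.inl ℓ) * X (Sum.inr ℓ₁) : MvPolynomial (Fin r ⊕ Fin r) k) := by
  rcases lt_trichotomy ℓ ℓ₁ with h | h | h
  · rw [Ideal.Quotient.eq]
    have h' : (X (Sum.inl ℓ) * X (Sum.inr ℓ₁) - X (Sum.inl ℓ₁) * X (Sum.inr ℓ) : MvPolynomial (Fin r ⊕ Fin r) k) ∈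
        Jideal k r := Ideal.subset_span ⟨ℓ, ℓ₁, h, rfl⟩
    simpa [neg_sub] using (Jideal k r).neg_mem h'
  · rw [h]
  · rw [Ideal.Quotient.eq]
    exact Ideal.subset_span ⟨ℓ₁, ℓ, h, rfl⟩

lemma hinv_lemma :
    algebraMap (MvPolynomial (Fin r ⊕ Fin r) k ⧸ Jideal k r) (Localization.Away ((Ideal.Quotient.mk (Jideal k r)) (X (Sum.inr ℓ₁) : MvPolynomial (Fin r ⊕ Fin r) k))) ((Ideal.Quotient.mk (Jideal k r)) (X (Sum.inr ℓ₁) : MvPolynomial (Fin r ⊕ Fin r) k)) * Psi k r ℓ₁ (U0inv k r) = 1 := by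
  have h := congrArg (Psi k r ℓ₁) (U0_mul_U0inv k r)
  rw [map_mul, map_one, Psi_mk, bwd_X0] at h
  exact h

set_option synthInstance.maxHeartbeats 1000000 in
set_option maxHeartbeats 1000000 in
lemma PsiPhi : (Psi k r ℓ₁).comp (Phi k r ℓ₁) = AlgHom.id k (Localization.Away ((Ideal.Quotient.mk (Jideal k r)) (X (Sum.inr ℓ₁) : MvPolynomial (Fin r ⊕ Fin r) k))) := by
  apply hom_ext_M k r ℓ₁ (T := Localization.Away ((Ideal.Quotient.mk (Jideal k r)) (X (Sum.inr ℓ₁) : MvPolynomial (Fin r ⊕ Fin r) k)))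
  intro i
  simp only [AlgHom.comp_apply, AlgHom.coe_id, id_eq]
  rw [Phi_mk, fwdQ_mk]
  have hu : IsUnit (algebraMap (MvPolynomial (Fin r ⊕ Fin r) k ⧸ Jideal k r) (Localization.Away ((Ideal.Quotient.mk (Jideal k r)) (X (Sum.inr ℓ₁) : MvPolynomial (Fin r ⊕ Fin r) k))) ((Ideal.Quotient.mk (Jideal k r)) (X (Sum.inr ℓ₁) : MvPolynomial (Fin r ⊕ Fin r) k))) :=
    IsLocalization.Away.algebraMap_isUnit (S := Localization.Away ((Ideal.Quotient.mk (Jideal k r)) (X (Sum.inr ℓ₁) : MvPolynomial (Fin r ⊕ Fin r) k))) _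
  cases i with
  | inr ℓ =>
    rw [fwd_Xinr, Psi_mk]
    by_cases h : ℓ = ℓ₁
    · subst h
      rw [show sigmaMap r ℓ ℓ = 0 from if_pos rfl, bwd_X0]
    · rw [show sigmaMap r ℓ₁ ℓ = ℓ.succ from if_neg h, bwd_Xsucc, if_neg h]
  | inl ℓ =>
    rw [fwd_Xinl, map_mul, Psi_mk, map_mul, bwd_Xsucc, if_pos rfl]
    by_cases h : ℓ = ℓ₁
    · subst h
      rw [show sigmaMap r ℓ ℓ = 0 from if_pos rfl, bwd_X0, mul_assoc, hinv_lemma, mul_one]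
    · rw [show sigmaMap r ℓ₁ ℓ = ℓ.succ from if_neg h, bwd_Xsucc, if_neg h]
      apply hu.mul_left_cancel
      calc algebraMap (MvPolynomial (Fin r ⊕ Fin r) k ⧸ Jideal k r) (Localization.Away ((Ideal.Quotient.mk (Jideal k r)) (X (Sum.inr ℓ₁) : MvPolynomial (Fin r ⊕ Fin r) k))) ((Ideal.Quotient.mk (Jideal k r)) (X (Sum.inr ℓ₁) : MvPolynomial (Fin r ⊕ Fin r) k)) *
            (algebraMap (MvPolynomial (Fin r ⊕ Fin r) k ⧸ Jideal k r) (Localization.Away ((Ideal.Quotient.mk (Jideal k r)) (X (Sum.inr ℓ₁) : MvPolynomial (Fin r ⊕ Fin r) k))) ((Ideal.Quotient.mk (Jideal k r)) (X (Sum.inl ℓ₁))) *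
            algebraMap (MvPolynomial (Fin r ⊕ Fin r) k ⧸ Jideal k r) (Localization.Away ((Ideal.Quotient.mk (Jideal k r)) (X (Sum.inr ℓ₁) : MvPolynomial (Fin r ⊕ Fin r) k))) ((Ideal.Quotient.mk (Jideal k r)) (X (Sum.inr ℓ))) *
            Psi k r ℓ₁ (U0inv k r))
          = algebraMap (MvPolynomial (Fin r ⊕ Fin r) k ⧸ Jideal k r) (Localization.Away ((Ideal.Quotient.mk (Jideal k r)) (X (Sum.inr ℓ₁) : MvPolynomial (Fin r ⊕ Fin r) k))) ((Ideal.Quotient.mk (Jideal k r)) (X (Sum.inl ℓ₁))) *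
            algebraMap (MvPolynomial (Fin r ⊕ Fin r) k ⧸ Jideal k r) (Localization.Away ((Ideal.Quotient.mk (Jideal k r)) (X (Sum.inr ℓ₁) : MvPolynomial (Fin r ⊕ Fin r) k))) ((Ideal.Quotient.mk (Jideal k r)) (X (Sum.inr ℓ))) *
            (algebraMap (MvPolynomial (Fin r ⊕ Fin r) k ⧸ Jideal k r) (Localization.Away ((Ideal.Quotient.mk (Jideal k r)) (X (Sum.inr ℓ₁) : MvPolynomial (Fin r ⊕ Fin r) k))) ((Ideal.Quotient.mk (Jideal k r)) (X (Sum.inr ℓ₁) : MvPolynomial (Fin r ⊕ Fin r) k)) * Psi k r ℓ₁ (U0inv k r)) := by ring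
        _ = algebraMap (MvPolynomial (Fin r ⊕ Fin r) k ⧸ Jideal k r) (Localization.Away ((Ideal.Quotient.mk (Jideal k r)) (X (Sum.inr ℓ₁) : MvPolynomial (Fin r ⊕ Fin r) k))) ((Ideal.Quotient.mk (Jideal k r))
              (X (Sum.inl ℓ₁) * X (Sum.inr ℓ))) := by
            rw [hinv_lemma, mul_one, ← map_mul, ← map_mul]
        _ = algebraMap (MvPolynomial (Fin r ⊕ Fin r) k ⧸ Jideal k r) (Localization.Away ((Ideal.Quotient.mk (Jideal k r)) (X (Sum.inr ℓ₁) : MvPolynomial (Fin r ⊕ Fin r) k))) ((Ideal.Quotient.mk (Jideal k r))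
              (X (Sum.inl ℓ) * X (Sum.inr ℓ₁))) := by rw [mk_rel]
        _ = algebraMap (MvPolynomial (Fin r ⊕ Fin r) k ⧸ Jideal k r) (Localization.Away ((Ideal.Quotient.mk (Jideal k r)) (X (Sum.inr ℓ₁) : MvPolynomial (Fin r ⊕ Fin r) k))) ((Ideal.Quotient.mk (Jideal k r)) (X (Sum.inr ℓ₁) : MvPolynomial (Fin r ⊕ Fin r) k)) *
            algebraMap (MvPolynomial (Fin r ⊕ Fin r) k ⧸ Jideal k r) (Localization.Away ((Ideal.Quotient.mk (Jideal k r)) (X (Sum.inr ℓ₁) : MvPolynomial (Fin r ⊕ Fin r) k))) ((Ideal.Quotient.mk (Jideal k r)) (X (Sum.inl ℓ))) := by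
            rw [mul_comm (X (Sum.inl ℓ) : MvPolynomial (Fin r ⊕ Fin r) k) (X (Sum.inr ℓ₁)), map_mul, map_mul]

lemma PhiPsi : (Phi k r ℓ₁).comp (Psi k r ℓ₁) = AlgHom.id k (Localization.Away (X (0 : Fin (r+1)) : MvPolynomial (Fin (r+1)) k)) := by
  apply hom_ext_L
  intro i
  simp only [AlgHom.comp_apply, AlgHom.coe_id, id_eq]
  rw [Psi_mk]
  refine Fin.cases ?_ ?_ i
  · rw [bwd_X0, Phi_mk, fwdQ_mk, fwd_Xinr, show sigmaMap r ℓ₁ ℓ₁ = 0 from if_pos rfl]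
  · intro ℓ
    rw [bwd_Xsucc]
    by_cases h : ℓ = ℓ₁
    · subst h
      rw [if_pos rfl, Phi_mk, fwdQ_mk, fwd_Xinl, show sigmaMap r ℓ ℓ = 0 from if_pos rfl,
        map_mul]
      calc algebraMap (MvPolynomial (Fin (r+1)) k) (Localization.Away (X (0 : Fin (r+1)) : MvPolynomial (Fin (r+1)) k)) (X ℓ.succ) * algebraMap (MvPolynomial (Fin (r+1)) k) (Localization.Away (X (0 : Fin (r+1)) : MvPolynomial (Fin (r+1)) k)) (X 0) * U0inv k r
          = algebraMap (MvPolynomial (Fin (r+1)) k) (Localization.Away (X (0 : Fin (r+1)) : MvPolynomial (Fin (r+1)) k)) (X ℓ.succ) *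
            (algebraMap (MvPolynomial (Fin (r+1)) k) (Localization.Away (X (0 : Fin (r+1)) : MvPolynomial (Fin (r+1)) k)) (X 0) * U0inv k r) := by ring
        _ = _ := by rw [U0_mul_U0inv, mul_one]
    · rw [if_neg h, Phi_mk, fwdQ_mk, fwd_Xinr, show sigmaMap r ℓ₁ ℓ = ℓ.succ from if_neg h]

end Aux


/-- For any fixed `ℓ₁` with `0 ≤ ℓ₁ < r`, the localization of `B_r/J_r` away from the image
of `Y_{ℓ₁}` is `k`-isomorphic to the localization of the polynomial ring `k[U_0,…,U_r]` in
`r+1` variables away from the variable `U_0`. -/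
theorem stmt_5 (k : Type*) [Field k] [IsAlgClosed k] (p : ℕ) (hp : p.Prime)
    (hp2 : 2 < p) [CharP k p] (r : ℕ) (hr : 1 ≤ r) (ℓ₁ : Fin r) :
    Nonempty
      ((Localization.Away ((Ideal.Quotient.mk (Jideal k r)) (X (Sum.inr ℓ₁)))) ≃ₐ[k]
        Localization.Away (X (0 : Fin (r + 1)) : MvPolynomial (Fin (r + 1)) k)) := by
  exact ⟨AlgEquiv.ofAlgHom (Phi k r ℓ₁) (Psi k r ℓ₁) (PhiPsi k r ℓ₁) (PsiPhi k r ℓ₁)⟩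
end

section
/- The localization of Q_r away from the image of x_0 is isomorphic as a k-algebra to the localization of the polynomial ring k[U_0,…,U_r] in r+1 variables away from the variable U_0. (Explicitly, after inverting x_0, Q_r becomes the polynomial ring on x_0,…,x_{r−1} and y_0 with x_0 inverted, since y_ℓ = y_0^{p^{ℓ}}·x_ℓ·x_0^{−p^{ℓ}} for every ℓ ≥ 1.) -/
open MvPolynomial

/-- The ideal of relations defining `Q_r`: inside the polynomial ring
`k[x_0,…,x_{r-1},y_0,…,y_{r-1}]` (on the index type `Fin r ⊕ Fin r`, with `Sum.inl ℓ` the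
variable `x_ℓ` and `Sum.inr ℓ` the variable `y_ℓ`), it is generated by the elements
`x_ℓ^{p^{ℓ'−ℓ}}·y_{ℓ'} − y_ℓ^{p^{ℓ'−ℓ}}·x_{ℓ'}` for all `0 ≤ ℓ < ℓ' < r`. -/
noncomputable def Qrel (k : Type*) [CommRing k] (p r : ℕ) :
    Ideal (MvPolynomial (Fin r ⊕ Fin r) k) :=
  Ideal.span { f | ∃ ℓ ℓ' : Fin r, ℓ < ℓ' ∧
    f = X (Sum.inl ℓ) ^ p ^ ((ℓ' : ℕ) - (ℓ : ℕ)) * X (Sum.inr ℓ') -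
        X (Sum.inr ℓ) ^ p ^ ((ℓ' : ℕ) - (ℓ : ℕ)) * X (Sum.inl ℓ') }

section Aux

variable (k : Type*) [CommRing k] (p r : ℕ) (hr : 1 ≤ r)

/-- The quotient ring `Q_r`. -/
abbrev QQ : Type _ := MvPolynomial (Fin r ⊕ Fin r) k ⧸ Qrel k p r

/-- The localization of `Q_r` away from `x_0`. -/
noncomputable abbrev LL : Type _ :=
  Localization.Away (Ideal.Quotient.mk (Qrel k p r) (X (Sum.inl (⟨0, hr⟩ : Fin r))))

/-- The localization of the polynomial ring away from `U_0`. -/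
noncomputable abbrev TT : Type _ :=
  Localization.Away (X (0 : Fin (r + 1)) : MvPolynomial (Fin (r + 1)) k)

/-- The inverse of `U_0` in `TT`. -/
noncomputable def vAux : TT k r :=
  IsLocalization.Away.invSelf (S := TT k r) (X (0 : Fin (r + 1)) : MvPolynomial (Fin (r + 1)) k)

/-- The map from the polynomial ring on x's and y's into `TT`. -/
noncomputable def fAux : MvPolynomial (Fin r ⊕ Fin r) k →ₐ[k] TT k r :=
  aeval (Sum.elim
    (fun ℓ : Fin r => algebraMap (MvPolynomial (Fin (r + 1)) k) (TT k r) (X ℓ.castSucc))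
    (fun ℓ : Fin r =>
      algebraMap (MvPolynomial (Fin (r + 1)) k) (TT k r) (X (Fin.last r)) ^ p ^ (ℓ : ℕ) *
      algebraMap (MvPolynomial (Fin (r + 1)) k) (TT k r) (X ℓ.castSucc) *
      vAux k r ^ p ^ (ℓ : ℕ)))

lemma fAux_ker : ∀ a ∈ Qrel k p r, fAux k p r a = 0 := by
  suffices h : Qrel k p r ≤ RingHom.ker (fAux k p r) by
    intro a ha; exact h ha
  rw [Qrel, Ideal.span_le]
  rintro _ ⟨ℓ, ℓ', hℓ, rfl⟩
  rw [SetLike.mem_coe, RingHom.mem_ker]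
  have hd : (ℓ : ℕ) + ((ℓ' : ℕ) - (ℓ : ℕ)) = (ℓ' : ℕ) :=
    Nat.add_sub_cancel' (le_of_lt (by exact_mod_cast hℓ))
  simp only [fAux, map_sub, map_mul, map_pow, aeval_X, Sum.elim_inl, Sum.elim_inr]
  rw [sub_eq_zero, mul_pow, mul_pow, ← pow_mul, ← pow_mul, ← pow_add, hd]
  ring

/-- Induced map on the quotient. -/
noncomputable def gAux : QQ k p r →ₐ[k] TT k r :=
  Ideal.Quotient.liftₐ (Qrel k p r) (fAux k p r) (fAux_ker k p r)

lemma gAux_mk (a : MvPolynomial (Fin r ⊕ Fin r) k) :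
    gAux k p r (Ideal.Quotient.mk (Qrel k p r) a) = fAux k p r a := rfl

lemma castSucc_zero' : (Fin.castSucc (⟨0, hr⟩ : Fin r)) = (0 : Fin (r + 1)) := by
  ext; simp

lemma gAux_x0 :
    gAux k p r (Ideal.Quotient.mk (Qrel k p r) (X (Sum.inl (⟨0, hr⟩ : Fin r)))) =
      algebraMap (MvPolynomial (Fin (r + 1)) k) (TT k r) (X (0 : Fin (r + 1))) := by
  rw [gAux_mk]
  simp only [fAux, aeval_X, Sum.elim_inl, castSucc_zero' r hr]

lemma gAux_x0_isUnit :
    IsUnit (gAux k p r (Ideal.Quotient.mk (Qrel k p r) (X (Sum.inl (⟨0, hr⟩ : Fin r))))) := by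
  rw [gAux_x0 k p r hr]
  exact IsLocalization.Away.algebraMap_isUnit _

/-- The forward map on localizations. -/
noncomputable def ΦAux : LL k p r hr →+* TT k r :=
  IsLocalization.Away.lift (S := LL k p r hr) (g := (gAux k p r).toRingHom) _
    (gAux_x0_isUnit k p r hr)

lemma ΦAux_mk (a : QQ k p r) :
    ΦAux k p r hr (algebraMap (QQ k p r) (LL k p r hr) a) = gAux k p r a :=
  IsLocalization.Away.lift_eq _ _ _

/-- The map from the (r+1)-variable polynomial ring to the localized quotient. -/
noncomputable def hAux : MvPolynomial (Fin (r + 1)) k →ₐ[k] LL k p r hr :=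
  aeval (fun j : Fin (r + 1) =>
    if hj : (j : ℕ) < r then
      algebraMap (QQ k p r) (LL k p r hr)
        (Ideal.Quotient.mk (Qrel k p r) (X (Sum.inl (⟨j, hj⟩ : Fin r))))
    else
      algebraMap (QQ k p r) (LL k p r hr)
        (Ideal.Quotient.mk (Qrel k p r) (X (Sum.inr (⟨0, hr⟩ : Fin r)))))

lemma hAux_X0 :
    hAux k p r hr (X (0 : Fin (r + 1))) =
      algebraMap (QQ k p r) (LL k p r hr)
        (Ideal.Quotient.mk (Qrel k p r) (X (Sum.inl (⟨0, hr⟩ : Fin r)))) := by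
  simp only [hAux, aeval_X]
  rw [dif_pos (show ((0 : Fin (r+1)) : ℕ) < r by simp; omega)]
  norm_num

lemma hAux_X0_isUnit : IsUnit (hAux k p r hr (X (0 : Fin (r + 1)))) := by
  rw [hAux_X0 k p r hr]
  exact IsLocalization.Away.algebraMap_isUnit (S := LL k p r hr) _

/-- The backward map on localizations. -/
noncomputable def ΘAux : TT k r →+* LL k p r hr :=
  IsLocalization.Away.lift (S := TT k r) (g := (hAux k p r hr).toRingHom) _
    (hAux_X0_isUnit k p r hr)

lemma ΘAux_mk (a : MvPolynomial (Fin (r + 1)) k) :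
    ΘAux k p r hr (algebraMap (MvPolynomial (Fin (r + 1)) k) (TT k r) a) = hAux k p r hr a :=
  IsLocalization.Away.lift_eq _ _ _

lemma Φ_commutes (c : k) :
    ΦAux k p r hr (algebraMap k (LL k p r hr) c) = algebraMap k (TT k r) c := by
  rw [IsScalarTower.algebraMap_apply k (QQ k p r) (LL k p r hr), ΦAux_mk]
  exact (gAux k p r).commutes c

lemma Θ_commutes (c : k) :
    ΘAux k p r hr (algebraMap k (TT k r) c) = algebraMap k (LL k p r hr) c := by
  rw [IsScalarTower.algebraMap_apply k (MvPolynomial (Fin (r + 1)) k) (TT k r), ΘAux_mk]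
  exact (hAux k p r hr).commutes c

/-- The key relation in the quotient: `x_0^{p^ℓ} y_ℓ = y_0^{p^ℓ} x_ℓ`. -/
lemma key_rel (ℓ : Fin r) :
    Ideal.Quotient.mk (Qrel k p r)
        (X (Sum.inl (⟨0, hr⟩ : Fin r)) ^ p ^ (ℓ : ℕ) * X (Sum.inr ℓ)) =
      Ideal.Quotient.mk (Qrel k p r)
        (X (Sum.inr (⟨0, hr⟩ : Fin r)) ^ p ^ (ℓ : ℕ) * X (Sum.inl ℓ)) := by
  rcases eq_or_ne ℓ ⟨0, hr⟩ with h | h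
  · subst h
    simp only [Fin.val_mk, pow_zero, pow_one]
    rw [mul_comm]
  · rw [Ideal.Quotient.eq]
    apply Ideal.subset_span
    refine ⟨⟨0, hr⟩, ℓ, ?_, ?_⟩
    · have h0 : (ℓ : ℕ) ≠ 0 := fun h0 => h (Fin.ext h0)
      rw [Fin.lt_def]
      simpa using Nat.pos_of_ne_zero h0
    · norm_num

lemma x0_mul_v :
    algebraMap (MvPolynomial (Fin (r + 1)) k) (TT k r) (X (0 : Fin (r + 1))) * vAux k r = 1 :=
  IsLocalization.Away.mul_invSelf _

lemma x0_mul_w :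
    algebraMap (QQ k p r) (LL k p r hr)
        (Ideal.Quotient.mk (Qrel k p r) (X (Sum.inl (⟨0, hr⟩ : Fin r)))) *
      ΘAux k p r hr (vAux k r) = 1 := by
  have h2 := congrArg (ΘAux k p r hr)
    (IsLocalization.Away.mul_invSelf (S := TT k r)
      (X (0 : Fin (r + 1)) : MvPolynomial (Fin (r + 1)) k))
  rw [RingHom.map_mul, RingHom.map_one, ΘAux_mk, hAux_X0] at h2
  exact h2

set_option maxHeartbeats 1000000 in
set_option synthInstance.maxHeartbeats 400000 in
lemma ΦΘ : (ΦAux k p r hr).comp (ΘAux k p r hr) = RingHom.id (TT k r) := by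
  apply IsLocalization.ringHom_ext
    (Submonoid.powers (X (0 : Fin (r + 1)) : MvPolynomial (Fin (r + 1)) k))
  apply MvPolynomial.ringHom_ext
  · intro a
    simp only [RingHom.comp_apply, RingHom.id_apply]
    rw [show (C a : MvPolynomial (Fin (r + 1)) k) = algebraMap k _ a from rfl,
      ← IsScalarTower.algebraMap_apply k (MvPolynomial (Fin (r + 1)) k) (TT k r),
      Θ_commutes, Φ_commutes]
  · intro j
    simp only [RingHom.comp_apply, RingHom.id_apply]
    rw [ΘAux_mk]
    by_cases hj : (j : ℕ) < r
    · rw [show hAux k p r hr (X j) =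
          algebraMap (QQ k p r) (LL k p r hr)
            (Ideal.Quotient.mk (Qrel k p r) (X (Sum.inl (⟨j, hj⟩ : Fin r)))) by
        simp only [hAux, aeval_X]; rw [dif_pos hj]]
      rw [ΦAux_mk, gAux_mk]
      simp only [fAux, aeval_X, Sum.elim_inl]
      have hcs : (Fin.castSucc (⟨(j : ℕ), hj⟩ : Fin r)) = j := by ext; simp
      rw [hcs]
    · rw [show hAux k p r hr (X j) =
          algebraMap (QQ k p r) (LL k p r hr)
            (Ideal.Quotient.mk (Qrel k p r) (X (Sum.inr (⟨0, hr⟩ : Fin r)))) by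
        simp only [hAux, aeval_X]; rw [dif_neg hj]]
      rw [ΦAux_mk, gAux_mk]
      simp only [fAux, aeval_X, Sum.elim_inr, Fin.val_mk, pow_zero, pow_one]
      have hj' : j = Fin.last r := by
        ext
        have := j.isLt
        simp only [Fin.val_last]
        omega
      rw [castSucc_zero' r hr, mul_assoc, x0_mul_v k r, mul_one, hj']

set_option maxHeartbeats 1000000 in
set_option synthInstance.maxHeartbeats 400000 in
lemma ΘΦ : (ΘAux k p r hr).comp (ΦAux k p r hr) = RingHom.id (LL k p r hr) := by
  refine IsLocalization.ringHom_ext (R := QQ k p r) (S := LL k p r hr) (P := LL k p r hr)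
    (Submonoid.powers (Ideal.Quotient.mk (Qrel k p r) (X (Sum.inl (⟨0, hr⟩ : Fin r))))) ?_
  apply Ideal.Quotient.ringHom_ext
  apply MvPolynomial.ringHom_ext
  · intro a
    simp only [RingHom.comp_apply, RingHom.id_apply]
    rw [show (C a : MvPolynomial (Fin r ⊕ Fin r) k) = algebraMap k _ a from rfl,
      show (Ideal.Quotient.mk (Qrel k p r)) (algebraMap k _ a) = algebraMap k (QQ k p r) a
        from rfl,
      ← IsScalarTower.algebraMap_apply k (QQ k p r) (LL k p r hr),
      Φ_commutes, Θ_commutes]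
  · rintro (ℓ | ℓ)
    · simp only [RingHom.comp_apply, RingHom.id_apply]
      rw [ΦAux_mk, gAux_mk]
      simp only [fAux, aeval_X, Sum.elim_inl]
      rw [ΘAux_mk]
      simp only [hAux, aeval_X]
      rw [dif_pos (by simpa using ℓ.isLt : ((ℓ.castSucc : Fin (r+1)) : ℕ) < r)]
      simp
    · simp only [RingHom.comp_apply, RingHom.id_apply]
      rw [ΦAux_mk, gAux_mk]
      simp only [fAux, aeval_X, Sum.elim_inr]
      rw [RingHom.map_mul, RingHom.map_mul, RingHom.map_pow, RingHom.map_pow, ΘAux_mk, ΘAux_mk]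
      have h1 : hAux k p r hr (X (Fin.last r)) =
          algebraMap (QQ k p r) (LL k p r hr)
            (Ideal.Quotient.mk (Qrel k p r) (X (Sum.inr (⟨0, hr⟩ : Fin r)))) := by
        simp only [hAux, aeval_X]
        rw [dif_neg (by simp)]
      have h2 : hAux k p r hr (X ℓ.castSucc) =
          algebraMap (QQ k p r) (LL k p r hr)
            (Ideal.Quotient.mk (Qrel k p r) (X (Sum.inl ℓ))) := by
        simp only [hAux, aeval_X]
        rw [dif_pos (by simpa using ℓ.isLt : ((ℓ.castSucc : Fin (r+1)) : ℕ) < r)]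
        simp
      rw [h1, h2]
      have key := congrArg (algebraMap (QQ k p r) (LL k p r hr)) (key_rel k p r hr ℓ)
      rw [map_mul, map_mul, map_pow, map_pow, map_mul, map_mul, map_pow, map_pow] at key
      calc (algebraMap (QQ k p r) (LL k p r hr)
              ((Ideal.Quotient.mk (Qrel k p r)) (X (Sum.inr (⟨0, hr⟩ : Fin r))))) ^ p ^ (ℓ : ℕ) *
            algebraMap (QQ k p r) (LL k p r hr)
              ((Ideal.Quotient.mk (Qrel k p r)) (X (Sum.inl ℓ))) *
            ΘAux k p r hr (vAux k r) ^ p ^ (ℓ : ℕ)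
          = (algebraMap (QQ k p r) (LL k p r hr)
              ((Ideal.Quotient.mk (Qrel k p r)) (X (Sum.inl (⟨0, hr⟩ : Fin r))))) ^ p ^ (ℓ : ℕ) *
            algebraMap (QQ k p r) (LL k p r hr)
              ((Ideal.Quotient.mk (Qrel k p r)) (X (Sum.inr ℓ))) *
            ΘAux k p r hr (vAux k r) ^ p ^ (ℓ : ℕ) := by rw [← key]
        _ = (algebraMap (QQ k p r) (LL k p r hr)
              ((Ideal.Quotient.mk (Qrel k p r)) (X (Sum.inl (⟨0, hr⟩ : Fin r)))) *
              ΘAux k p r hr (vAux k r)) ^ p ^ (ℓ : ℕ) *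
            algebraMap (QQ k p r) (LL k p r hr)
              ((Ideal.Quotient.mk (Qrel k p r)) (X (Sum.inr ℓ))) := by ring
        _ = algebraMap (QQ k p r) (LL k p r hr)
              ((Ideal.Quotient.mk (Qrel k p r)) (X (Sum.inr ℓ))) := by
            rw [x0_mul_w, one_pow, one_mul]

end Aux

/-- The localization of `Q_r` away from the image of `x_0` is `k`-isomorphic to the
localization of the polynomial ring `k[U_0,…,U_r]` in `r+1` variables away from `U_0`. -/
theorem stmt_9 (k : Type*) [Field k] [IsAlgClosed k] (p : ℕ) (hp : p.Prime)
    (hp2 : 2 < p) [CharP k p] (r : ℕ) (hr : 1 ≤ r) :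
    Nonempty
      ((Localization.Away
          (Ideal.Quotient.mk (Qrel k p r) (X (Sum.inl (⟨0, hr⟩ : Fin r))))) ≃ₐ[k]
        Localization.Away (X (0 : Fin (r + 1)) : MvPolynomial (Fin (r + 1)) k)) := by
  refine ⟨AlgEquiv.ofAlgHom
    { ΦAux k p r hr with commutes' := Φ_commutes k p r hr }
    { ΘAux k p r hr with commutes' := Θ_commutes k p r hr } ?_ ?_⟩
  · exact AlgHom.ext fun x => RingHom.congr_fun (ΦΘ k p r hr) x
  · exact AlgHom.ext fun x => RingHom.congr_fun (ΘΦ k p r hr) x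
end

section
/- Assume r ≥ 2. The radical of the ideal I_r equals P_1 ∩ P_2; moreover P_1 is a prime ideal, neither P_1 ⊆ P_2 nor P_2 ⊆ P_1 holds, and consequently the radical of I_r is not a prime ideal (so the variety Y_r(U_4/Γ_3) is the non-trivial union of two irreducible closed subvarieties). -/
open MvPolynomial

/-- `C_r = k[x_0,…,x_{r-1},y_0,…,y_{r-1},z_0,…,z_{r-1}]` is realized as the multivariate
polynomial ring over `k` on the index type `Fin r ⊕ (Fin r ⊕ Fin r)`, where `Sum.inl ℓ` is
`x_ℓ`, `Sum.inr (Sum.inl ℓ)` is `y_ℓ` and `Sum.inr (Sum.inr ℓ)` is `z_ℓ`.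
`P_1 ⊆ C_r` is the ideal generated by `y_0,…,y_{r-1}`. -/
noncomputable def P1ideal (k : Type*) [CommRing k] (r : ℕ) :
    Ideal (MvPolynomial (Fin r ⊕ (Fin r ⊕ Fin r)) k) :=
  Ideal.span (Set.range fun ℓ : Fin r => X (Sum.inr (Sum.inl ℓ)))

/-- `P_2 ⊆ C_r` is the ideal generated by all 2×2 minors
`x_ℓ·y_{ℓ'} − x_{ℓ'}·y_ℓ`, `y_ℓ·z_{ℓ'} − y_{ℓ'}·z_ℓ`, `x_ℓ·z_{ℓ'} − x_{ℓ'}·z_ℓ`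
(`0 ≤ ℓ < ℓ' < r`) of the 3×r matrix whose rows are `(x_ℓ)`, `(y_ℓ)`, `(z_ℓ)`. -/
noncomputable def P2ideal (k : Type*) [CommRing k] (r : ℕ) :
    Ideal (MvPolynomial (Fin r ⊕ (Fin r ⊕ Fin r)) k) :=
  Ideal.span { f | ∃ ℓ ℓ' : Fin r, ℓ < ℓ' ∧
    (f = X (Sum.inl ℓ) * X (Sum.inr (Sum.inl ℓ')) -
         X (Sum.inl ℓ') * X (Sum.inr (Sum.inl ℓ)) ∨
     f = X (Sum.inr (Sum.inl ℓ)) * X (Sum.inr (Sum.inr ℓ')) -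
         X (Sum.inr (Sum.inl ℓ')) * X (Sum.inr (Sum.inr ℓ)) ∨
     f = X (Sum.inl ℓ) * X (Sum.inr (Sum.inr ℓ')) -
         X (Sum.inl ℓ') * X (Sum.inr (Sum.inr ℓ))) }

/-- `I_r ⊆ C_r` is the ideal generated by the elements `x_ℓ·y_{ℓ'} − x_{ℓ'}·y_ℓ` and
`y_ℓ·z_{ℓ'} − y_{ℓ'}·z_ℓ` for all `0 ≤ ℓ < ℓ' < r`. -/
noncomputable def Iideal (k : Type*) [CommRing k] (r : ℕ) :
    Ideal (MvPolynomial (Fin r ⊕ (Fin r ⊕ Fin r)) k) :=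
  Ideal.span { f | ∃ ℓ ℓ' : Fin r, ℓ < ℓ' ∧
    (f = X (Sum.inl ℓ) * X (Sum.inr (Sum.inl ℓ')) -
         X (Sum.inl ℓ') * X (Sum.inr (Sum.inl ℓ)) ∨
     f = X (Sum.inr (Sum.inl ℓ)) * X (Sum.inr (Sum.inr ℓ')) -
         X (Sum.inr (Sum.inl ℓ')) * X (Sum.inr (Sum.inr ℓ))) }

namespace StmtAux
open MvPolynomial

variable {k : Type*} [CommRing k] {r : ℕ}

abbrev σr (r : ℕ) := Fin r ⊕ (Fin r ⊕ Fin r)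

def pos (ρ : Fin 3) (ℓ : Fin r) : σr r :=
  if ρ = 0 then Sum.inl ℓ else if ρ = 1 then Sum.inr (Sum.inl ℓ) else Sum.inr (Sum.inr ℓ)

def row : σr r → Fin 3 := Sum.elim (fun _ => 0) (Sum.elim (fun _ => 1) (fun _ => 2))
def col : σr r → Fin r := Sum.elim id (Sum.elim id id)

@[simp] lemma pos_zero (ℓ : Fin r) : (pos 0 ℓ : σr r) = Sum.inl ℓ := rfl
@[simp] lemma pos_one (ℓ : Fin r) : (pos 1 ℓ : σr r) = Sum.inr (Sum.inl ℓ) := rfl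
@[simp] lemma pos_two (ℓ : Fin r) : (pos 2 ℓ : σr r) = Sum.inr (Sum.inr ℓ) := rfl

@[simp] lemma row_pos (ρ : Fin 3) (ℓ : Fin r) : row (pos ρ ℓ : σr r) = ρ := by
  fin_cases ρ <;> rfl

@[simp] lemma col_pos (ρ : Fin 3) (ℓ : Fin r) : col (pos ρ ℓ : σr r) = ℓ := by
  fin_cases ρ <;> rfl

@[simp] lemma pos_row_col (s : σr r) : pos (row s) (col s) = s := by
  rcases s with ℓ | s; · rfl
  rcases s with ℓ | ℓ <;> rfl

lemma pos_inj {ρ ρ' : Fin 3} {ℓ ℓ' : Fin r} (h : (pos ρ ℓ : σr r) = pos ρ' ℓ') :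
    ρ = ρ' ∧ ℓ = ℓ' :=
  ⟨by simpa using congrArg row h, by simpa using congrArg col h⟩

noncomputable def minor (k : Type*) [CommRing k] {r : ℕ} (ρ ρ' : Fin 3) (ℓ ℓ' : Fin r) :
    MvPolynomial (σr r) k :=
  X (pos ρ ℓ) * X (pos ρ' ℓ') - X (pos ρ ℓ') * X (pos ρ' ℓ)

lemma minor_row_swap (ρ ρ' : Fin 3) (ℓ ℓ' : Fin r) :
    minor k ρ' ρ ℓ ℓ' = - minor k ρ ρ' ℓ ℓ' := by
  unfold minor; ring

lemma minor_col_swap (ρ ρ' : Fin 3) (ℓ ℓ' : Fin r) :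
    minor k ρ ρ' ℓ' ℓ = - minor k ρ ρ' ℓ ℓ' := by
  unfold minor; ring

lemma minor_mem_P2_aux {ρ ρ' : Fin 3} {ℓ ℓ' : Fin r} (hρ : ρ < ρ') (hℓ : ℓ < ℓ') :
    minor k ρ ρ' ℓ ℓ' ∈ P2ideal k r := by
  fin_cases ρ <;> fin_cases ρ' <;> simp_all [minor] <;>
    [skip; skip; skip] <;> exact Ideal.subset_span ⟨ℓ, ℓ', hℓ, by simp [pos]⟩

lemma minor_mem_P2_aux2 {ρ ρ' : Fin 3} {ℓ ℓ' : Fin r} (hρ : ρ ≠ ρ') (hℓ : ℓ < ℓ') :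
    minor k ρ ρ' ℓ ℓ' ∈ P2ideal k r := by
  rcases hρ.lt_or_gt with h | h
  · exact minor_mem_P2_aux h hℓ
  · rw [show minor k ρ ρ' ℓ ℓ' = - minor k ρ' ρ ℓ ℓ' from by rw [minor_row_swap]]
    exact neg_mem (minor_mem_P2_aux h hℓ)

lemma minor_mem_P2 {ρ ρ' : Fin 3} {ℓ ℓ' : Fin r} (hρ : ρ ≠ ρ') (hℓ : ℓ ≠ ℓ') :
    minor k ρ ρ' ℓ ℓ' ∈ P2ideal k r := by
  rcases hℓ.lt_or_gt with h | h
  · exact minor_mem_P2_aux2 hρ h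
  · rw [show minor k ρ ρ' ℓ ℓ' = - minor k ρ ρ' ℓ' ℓ from by rw [minor_col_swap]]
    exact neg_mem (minor_mem_P2_aux2 hρ h)

/-- xy-minors for arbitrary column indices lie in `I`. -/
lemma xy_mem_I (a b : Fin r) :
    X (Sum.inl a) * X (Sum.inr (Sum.inl b)) - X (Sum.inl b) * X (Sum.inr (Sum.inl a))
      ∈ Iideal k r := by
  rcases lt_trichotomy a b with h | h | h
  · exact Ideal.subset_span ⟨a, b, h, Or.inl rfl⟩
  · subst h; simp
  · have : X (Sum.inl b) * X (Sum.inr (Sum.inl a)) - X (Sum.inl a) * X (Sum.inr (Sum.inl b))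
        ∈ Iideal k r := Ideal.subset_span ⟨b, a, h, Or.inl rfl⟩
    simpa using neg_mem this

lemma yz_mem_I (a b : Fin r) :
    X (Sum.inr (Sum.inl a)) * X (Sum.inr (Sum.inr b)) -
      X (Sum.inr (Sum.inl b)) * X (Sum.inr (Sum.inr a)) ∈ Iideal k r := by
  rcases lt_trichotomy a b with h | h | h
  · exact Ideal.subset_span ⟨a, b, h, Or.inr rfl⟩
  · subst h; simp
  · have : X (Sum.inr (Sum.inl b)) * X (Sum.inr (Sum.inr a)) -
        X (Sum.inr (Sum.inl a)) * X (Sum.inr (Sum.inr b)) ∈ Iideal k r :=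
      Ideal.subset_span ⟨b, a, h, Or.inr rfl⟩
    simpa using neg_mem this

lemma I_le_P2 : Iideal k r ≤ P2ideal k r := by
  apply Ideal.span_mono
  rintro f ⟨ℓ, ℓ', h, hf | hf⟩
  · exact ⟨ℓ, ℓ', h, Or.inl hf⟩
  · exact ⟨ℓ, ℓ', h, Or.inr (Or.inl hf)⟩

lemma y_mem_P1 (m : Fin r) : (X (Sum.inr (Sum.inl m)) : MvPolynomial (σr r) k) ∈ P1ideal k r :=
  Ideal.subset_span ⟨m, rfl⟩

lemma I_le_P1 : Iideal k r ≤ P1ideal k r := by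
  rw [Iideal, Ideal.span_le]
  rintro f ⟨ℓ, ℓ', h, hf | hf⟩ <;> subst hf
  · exact sub_mem (Ideal.mul_mem_left _ _ (y_mem_P1 ℓ')) (Ideal.mul_mem_left _ _ (y_mem_P1 ℓ))
  · exact sub_mem (Ideal.mul_mem_right _ _ (y_mem_P1 ℓ)) (Ideal.mul_mem_right _ _ (y_mem_P1 ℓ'))

/-- P1 * P2 ⊆ I -/
lemma P1_mul_P2_le_I : P1ideal k r * P2ideal k r ≤ Iideal k r := by
  rw [P1ideal, P2ideal, Ideal.span_mul_span', Ideal.span_le]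
  rintro g ⟨a, ⟨m, rfl⟩, b, ⟨ℓ, ℓ', h, hb | hb | hb⟩, rfl⟩ <;> subst hb
  · exact Ideal.mul_mem_left _ _ (Ideal.subset_span ⟨ℓ, ℓ', h, Or.inl rfl⟩)
  · exact Ideal.mul_mem_left _ _ (Ideal.subset_span ⟨ℓ, ℓ', h, Or.inr rfl⟩)
  · have h1 := xy_mem_I (k := k) ℓ m
    have h2 := yz_mem_I (k := k) ℓ ℓ'
    have h3 := xy_mem_I (k := k) m ℓ'
    have hmem := add_mem (add_mem
        (Ideal.mul_mem_left _ (X (Sum.inr (Sum.inr ℓ'))) h1)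
        (Ideal.mul_mem_left _ (X (Sum.inl m)) h2))
      (Ideal.mul_mem_left _ (X (Sum.inr (Sum.inr ℓ))) h3)
    rw [SetLike.mem_coe]
    convert hmem using 1
    ring


/-! ### Marginals of exponents -/

def rowm (m : σr r →₀ ℕ) : Fin 3 → ℕ := fun ρ => ∑ ℓ : Fin r, m (pos ρ ℓ)
def colm (m : σr r →₀ ℕ) : Fin r → ℕ := fun ℓ => ∑ ρ : Fin 3, m (pos ρ ℓ)

lemma rowm_add (m m' : σr r →₀ ℕ) : rowm (m + m') = fun ρ => rowm m ρ + rowm m' ρ := by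
  funext ρ; simp [rowm, Finset.sum_add_distrib]

lemma colm_add (m m' : σr r →₀ ℕ) : colm (m + m') = fun ℓ => colm m ℓ + colm m' ℓ := by
  funext ℓ; simp [colm, Finset.sum_add_distrib]

lemma rowm_single (s : σr r) (e : ℕ) :
    rowm (Finsupp.single s e) = fun ρ => if row s = ρ then e else 0 := by
  funext ρ
  by_cases h : row s = ρ
  · subst h
    rw [rowm, if_pos rfl, Finset.sum_eq_single (col s)]
    · simp
    · intro ℓ _ hℓ
      rw [Finsupp.single_apply, if_neg]
      intro hc
      have : col s = ℓ := by simpa using congrArg col hc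
      exact hℓ this.symm
    · simp
  · rw [rowm, if_neg h, Finset.sum_eq_zero]
    intro ℓ _
    rw [Finsupp.single_apply, if_neg]
    intro hc
    exact h (by simpa using (congrArg row hc))

lemma colm_single (s : σr r) (e : ℕ) :
    colm (Finsupp.single s e) = fun ℓ => if col s = ℓ then e else 0 := by
  funext ℓ
  by_cases h : col s = ℓ
  · subst h
    rw [colm, if_pos rfl, Finset.sum_eq_single (row s)]
    · simp
    · intro ρ _ hρ
      rw [Finsupp.single_apply, if_neg]
      intro hc
      have : row s = ρ := by simpa using congrArg row hc
      exact hρ this.symm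
    · simp
  · rw [colm, if_neg h, Finset.sum_eq_zero]
    intro ρ _
    rw [Finsupp.single_apply, if_neg]
    intro hc
    exact h (by simpa using (congrArg col hc))

/-- total degree as a double sum -/
lemma total_eq (m : σr r →₀ ℕ) : ∑ s : σr r, m s = rowm m 0 + rowm m 1 + rowm m 2 := by
  rw [Fintype.sum_sum_type, Fintype.sum_sum_type]
  simp only [rowm]
  have h0 : ∀ ℓ : Fin r, (pos 0 ℓ : σr r) = Sum.inl ℓ := fun _ => rfl
  have h1 : ∀ ℓ : Fin r, (pos 1 ℓ : σr r) = Sum.inr (Sum.inl ℓ) := fun _ => rfl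
  have h2 : ∀ ℓ : Fin r, (pos 2 ℓ : σr r) = Sum.inr (Sum.inr ℓ) := fun _ => rfl
  simp only [h0, h1, h2]
  ring

/-- the distance used for induction -/
def D (m m' : σr r →₀ ℕ) : ℕ := ∑ s : σr r, ((m s - m' s) + (m' s - m s))

lemma D_eq_zero {m m' : σr r →₀ ℕ} (h : D m m' = 0) : m = m' := by
  rw [D, Finset.sum_eq_zero_iff] at h
  ext s
  have := h s (Finset.mem_univ s)
  omega

lemma exists_gt_of_ne {m m' : σr r →₀ ℕ} (hne : m ≠ m')
    (h : ∑ s : σr r, m s = ∑ s : σr r, m' s) : ∃ s, m' s < m s := by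
  by_contra hcon
  push_neg at hcon
  obtain ⟨s, hs⟩ : ∃ s, m s ≠ m' s := by
    by_contra h'
    push_neg at h'
    exact hne (Finsupp.ext h')
  have hlt : m s < m' s := lt_of_le_of_ne (hcon s) hs
  have := Finset.sum_lt_sum (fun i _ => hcon i) ⟨s, Finset.mem_univ s, hlt⟩
  omega

lemma exists_lt_of_sum_eq {ι : Type*} [Fintype ι] {a b : ι → ℕ}
    (h : ∑ i, a i = ∑ i, b i) {i : ι} (hi : b i < a i) : ∃ j, j ≠ i ∧ a j < b j := by
  by_contra hcon
  push_neg at hcon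
  have hle : ∀ j ∈ Finset.univ (α := ι), b j ≤ a j := by
    intro j _
    by_cases hj : j = i
    · subst hj; exact hi.le
    · exact hcon j hj
  have := Finset.sum_lt_sum hle ⟨i, Finset.mem_univ i, hi⟩
  omega


section Swap

variable {ρ ρ' : Fin 3} {ℓ ℓ' : Fin r}

/-- change rowm_add etc to pointwise versions -/
lemma rowm_add' (m m' : σr r →₀ ℕ) (t : Fin 3) : rowm (m + m') t = rowm m t + rowm m' t := by
  rw [rowm_add]

lemma colm_add' (m m' : σr r →₀ ℕ) (t : Fin r) : colm (m + m') t = colm m t + colm m' t := by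
  rw [colm_add]

lemma rowm_single' (s : σr r) (e : ℕ) (t : Fin 3) :
    rowm (Finsupp.single s e) t = if row s = t then e else 0 := by rw [rowm_single]

lemma colm_single' (s : σr r) (e : ℕ) (t : Fin r) :
    colm (Finsupp.single s e) t = if col s = t then e else 0 := by rw [colm_single]

/-- the exponent after applying a swap at rows ρ,ρ' and columns ℓ,ℓ' -/
noncomputable def swapExp (m : σr r →₀ ℕ) (ρ ρ' : Fin 3) (ℓ ℓ' : Fin r) : σr r →₀ ℕ :=
  m - Finsupp.single (pos ρ ℓ) 1 - Finsupp.single (pos ρ' ℓ') 1 +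
    Finsupp.single (pos ρ ℓ') 1 + Finsupp.single (pos ρ' ℓ) 1

lemma swapExp_apply (m : σr r →₀ ℕ) (ρ ρ' : Fin 3) (ℓ ℓ' : Fin r) (s : σr r) :
    swapExp m ρ ρ' ℓ ℓ' s =
      m s - (if pos ρ ℓ = s then 1 else 0) - (if pos ρ' ℓ' = s then 1 else 0) +
        (if pos ρ ℓ' = s then 1 else 0) + (if pos ρ' ℓ = s then 1 else 0) := by
  simp [swapExp, Finsupp.tsub_apply, Finsupp.add_apply, Finsupp.single_apply]

lemma swapExp_decomp (m : σr r →₀ ℕ) (hρ : ρ ≠ ρ')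
    (h1 : 1 ≤ m (pos ρ ℓ)) (h2 : 1 ≤ m (pos ρ' ℓ')) :
    m = (m - Finsupp.single (pos ρ ℓ) 1 - Finsupp.single (pos ρ' ℓ') 1) +
        Finsupp.single (pos ρ ℓ) 1 + Finsupp.single (pos ρ' ℓ') 1 := by
  have hab : (pos ρ ℓ : σr r) ≠ pos ρ' ℓ' := fun h => hρ (pos_inj h).1
  ext s
  simp only [Finsupp.add_apply, Finsupp.tsub_apply, Finsupp.single_apply]
  split_ifs with e1 e2 <;> first | omega | (simp_all; omega) | simp_all

lemma swapExp_eq (m : σr r →₀ ℕ) :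
    swapExp m ρ ρ' ℓ ℓ' = (m - Finsupp.single (pos ρ ℓ) 1 - Finsupp.single (pos ρ' ℓ') 1) +
      (Finsupp.single (pos ρ ℓ') 1 + Finsupp.single (pos ρ' ℓ) 1) := by
  rw [swapExp, add_assoc]

lemma swap_step (m : σr r →₀ ℕ) (hρ : ρ ≠ ρ') (hℓ : ℓ ≠ ℓ')
    (h1 : 1 ≤ m (pos ρ ℓ)) (h2 : 1 ≤ m (pos ρ' ℓ')) :
    (monomial m 1 - monomial (swapExp m ρ ρ' ℓ ℓ') 1 : MvPolynomial (σr r) k) ∈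
      P2ideal k r := by
  have hm0 : ∀ u v : σr r, (X u * X v : MvPolynomial (σr r) k) =
      monomial (Finsupp.single u 1 + Finsupp.single v 1) 1 := by
    intro u v
    rw [X, X, monomial_mul, one_mul]
  have key : (monomial m 1 - monomial (swapExp m ρ ρ' ℓ ℓ') 1 : MvPolynomial (σr r) k) =
      monomial (m - Finsupp.single (pos ρ ℓ) 1 - Finsupp.single (pos ρ' ℓ') 1) 1 *
        minor k ρ ρ' ℓ ℓ' := by
    have hd1 : m = (m - Finsupp.single (pos ρ ℓ) 1 - Finsupp.single (pos ρ' ℓ') 1) +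
        (Finsupp.single (pos ρ ℓ) 1 + Finsupp.single (pos ρ' ℓ') 1) := by
      rw [← add_assoc]
      exact swapExp_decomp m hρ h1 h2
    rw [minor, mul_sub, hm0, hm0, monomial_mul, monomial_mul, one_mul, ← hd1,
      ← swapExp_eq]
  rw [key]
  exact Ideal.mul_mem_left _ _ (minor_mem_P2 hρ hℓ)

lemma rowm_swapExp (m : σr r →₀ ℕ) (hρ : ρ ≠ ρ')
    (h1 : 1 ≤ m (pos ρ ℓ)) (h2 : 1 ≤ m (pos ρ' ℓ')) :
    rowm (swapExp m ρ ρ' ℓ ℓ') = rowm m := by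
  funext t
  conv_rhs => rw [swapExp_decomp m hρ h1 h2]
  rw [swapExp_eq, rowm_add', rowm_add', rowm_add', rowm_add', rowm_single', rowm_single',
    rowm_single', rowm_single', row_pos, row_pos, row_pos, row_pos]
  ring

lemma colm_swapExp (m : σr r →₀ ℕ) (hρ : ρ ≠ ρ')
    (h1 : 1 ≤ m (pos ρ ℓ)) (h2 : 1 ≤ m (pos ρ' ℓ')) :
    colm (swapExp m ρ ρ' ℓ ℓ') = colm m := by
  funext t
  conv_rhs => rw [swapExp_decomp m hρ h1 h2]
  rw [swapExp_eq, colm_add', colm_add', colm_add', colm_add', colm_single', colm_single',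
    colm_single', colm_single', col_pos, col_pos, col_pos, col_pos]
  ring

lemma D_swapExp (m m' : σr r →₀ ℕ) (hρ : ρ ≠ ρ') (hℓ : ℓ ≠ ℓ')
    (ha : m' (pos ρ ℓ) < m (pos ρ ℓ)) (hb : m' (pos ρ' ℓ') < m (pos ρ' ℓ'))
    (hd : m (pos ρ' ℓ) < m' (pos ρ' ℓ)) :
    D (swapExp m ρ ρ' ℓ ℓ') m' + 2 ≤ D m m' := by
  classical
  have hab : (pos ρ ℓ : σr r) ≠ pos ρ' ℓ' := fun h => hρ (pos_inj h).1
  have hac : (pos ρ ℓ : σr r) ≠ pos ρ ℓ' := fun h => hℓ (pos_inj h).2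
  have had : (pos ρ ℓ : σr r) ≠ pos ρ' ℓ := fun h => hρ (pos_inj h).1
  have hbc : (pos ρ' ℓ' : σr r) ≠ pos ρ ℓ' := fun h => hρ (pos_inj h).1.symm
  have hbd : (pos ρ' ℓ' : σr r) ≠ pos ρ' ℓ := fun h => hℓ (pos_inj h).2.symm
  have hcd : (pos ρ ℓ' : σr r) ≠ pos ρ' ℓ := fun h => hρ (pos_inj h).1
  have va : swapExp m ρ ρ' ℓ ℓ' (pos ρ ℓ) = m (pos ρ ℓ) - 1 := by
    rw [swapExp_apply, if_pos rfl, if_neg hab.symm, if_neg hac.symm, if_neg had.symm]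
    omega
  have vb : swapExp m ρ ρ' ℓ ℓ' (pos ρ' ℓ') = m (pos ρ' ℓ') - 1 := by
    rw [swapExp_apply, if_neg hab, if_pos rfl, if_neg hbc.symm, if_neg hbd.symm]
    omega
  have vc : swapExp m ρ ρ' ℓ ℓ' (pos ρ ℓ') = m (pos ρ ℓ') + 1 := by
    rw [swapExp_apply, if_neg hac, if_neg hbc, if_pos rfl, if_neg hcd.symm]
    omega
  have vd : swapExp m ρ ρ' ℓ ℓ' (pos ρ' ℓ) = m (pos ρ' ℓ) + 1 := by
    rw [swapExp_apply, if_neg had, if_neg hbd, if_neg hcd, if_pos rfl]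
    omega
  have hsub : ({pos ρ ℓ, pos ρ' ℓ', pos ρ ℓ', pos ρ' ℓ} : Finset (σr r)) ⊆ Finset.univ :=
    Finset.subset_univ _
  have hsum4 : ∀ x : σr r →₀ ℕ,
      ∑ s ∈ ({pos ρ ℓ, pos ρ' ℓ', pos ρ ℓ', pos ρ' ℓ} : Finset (σr r)),
        ((x s - m' s) + (m' s - x s)) =
      ((x (pos ρ ℓ) - m' (pos ρ ℓ)) + (m' (pos ρ ℓ) - x (pos ρ ℓ))) +
      (((x (pos ρ' ℓ') - m' (pos ρ' ℓ')) + (m' (pos ρ' ℓ') - x (pos ρ' ℓ'))) +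
      (((x (pos ρ ℓ') - m' (pos ρ ℓ')) + (m' (pos ρ ℓ') - x (pos ρ ℓ'))) +
      ((x (pos ρ' ℓ) - m' (pos ρ' ℓ)) + (m' (pos ρ' ℓ) - x (pos ρ' ℓ))))) := by
    intro x
    rw [Finset.sum_insert (by simp [hab, hac, had]),
      Finset.sum_insert (by simp [hbc, hbd]),
      Finset.sum_insert (by simp [hcd]), Finset.sum_singleton]
  have hsplit : ∀ x : σr r →₀ ℕ,
      D x m' = ∑ s ∈ Finset.univ \ ({pos ρ ℓ, pos ρ' ℓ', pos ρ ℓ', pos ρ' ℓ} : Finset (σr r)),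
          ((x s - m' s) + (m' s - x s)) +
        ∑ s ∈ ({pos ρ ℓ, pos ρ' ℓ', pos ρ ℓ', pos ρ' ℓ} : Finset (σr r)),
          ((x s - m' s) + (m' s - x s)) :=
    fun x => (Finset.sum_sdiff hsub).symm
  have hagree :
      ∑ s ∈ Finset.univ \ ({pos ρ ℓ, pos ρ' ℓ', pos ρ ℓ', pos ρ' ℓ} : Finset (σr r)),
        ((swapExp m ρ ρ' ℓ ℓ' s - m' s) + (m' s - swapExp m ρ ρ' ℓ ℓ' s)) =
      ∑ s ∈ Finset.univ \ ({pos ρ ℓ, pos ρ' ℓ', pos ρ ℓ', pos ρ' ℓ} : Finset (σr r)),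
        ((m s - m' s) + (m' s - m s)) := by
    apply Finset.sum_congr rfl
    intro s hs
    simp only [Finset.mem_sdiff, Finset.mem_insert, Finset.mem_singleton, Finset.mem_univ,
      true_and] at hs
    push_neg at hs
    obtain ⟨h1, h2, h3, h4⟩ := hs
    rw [swapExp_apply, if_neg (Ne.symm h1), if_neg (Ne.symm h2), if_neg (Ne.symm h3),
      if_neg (Ne.symm h4)]
    omega
  rw [hsplit (swapExp m ρ ρ' ℓ ℓ'), hsplit m, hagree, hsum4, hsum4, va, vb, vc, vd]
  omega

/-- Connectivity: two monomials with the same row and column marginals are congruent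
modulo `P2`. -/
lemma swap_conn (n : ℕ) : ∀ m m' : σr r →₀ ℕ, D m m' ≤ n →
    rowm m = rowm m' → colm m = colm m' →
    (monomial m 1 - monomial m' 1 : MvPolynomial (σr r) k) ∈ P2ideal k r := by
  induction n with
  | zero =>
    intro m m' hD _ _
    rw [D_eq_zero (Nat.le_zero.mp hD)]
    simp
  | succ n ih =>
    intro m m' hD hrow hcol
    by_cases hmm : m = m'
    · rw [hmm]; simp
    -- totals are equal
    have htot : ∑ s : σr r, m s = ∑ s : σr r, m' s := by
      rw [total_eq, total_eq, hrow]
    obtain ⟨s, hs⟩ := exists_gt_of_ne hmm htot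
    -- s = pos ρ ℓ
    set ρ := row s with hρdef
    set ℓ := col s with hℓdef
    have hspos : s = pos ρ ℓ := (pos_row_col s).symm
    rw [hspos] at hs
    -- column ℓ : find ρ' ≠ ρ with m (pos ρ' ℓ) < m' (pos ρ' ℓ)
    have hcℓ : ∑ t : Fin 3, m (pos t ℓ) = ∑ t : Fin 3, m' (pos t ℓ) := congrFun hcol ℓ
    obtain ⟨ρ', hρ'ne, hρ'⟩ := exists_lt_of_sum_eq hcℓ hs
    -- row ρ' : find ℓ' ≠ ℓ with m' (pos ρ' ℓ') < m (pos ρ' ℓ')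
    have hrρ' : ∑ u : Fin r, m' (pos ρ' u) = ∑ u : Fin r, m (pos ρ' u) :=
      (congrFun hrow ρ').symm
    obtain ⟨ℓ', hℓ'ne, hℓ'⟩ := exists_lt_of_sum_eq hrρ' hρ'
    have hρne : ρ ≠ ρ' := hρ'ne.symm
    have hℓne : ℓ ≠ ℓ' := hℓ'ne.symm
    have h1 : 1 ≤ m (pos ρ ℓ) := by omega
    have h2 : 1 ≤ m (pos ρ' ℓ') := by omega
    have hstep := swap_step (k := k) m hρne hℓne h1 h2
    have hDlt := D_swapExp m m' hρne hℓne hs hℓ' hρ'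
    have hind := ih (swapExp m ρ ρ' ℓ ℓ') m' (by omega)
      (by rw [rowm_swapExp m hρne h1 h2, hrow])
      (by rw [colm_swapExp m hρne h1 h2, hcol])
    have := add_mem hstep hind
    rwa [sub_add_sub_cancel] at this

end Swap

section NormalForm

open Classical in
/-- a canonical exponent with given marginals (when one exists) -/
noncomputable def canonical (e : (Fin 3 → ℕ) × (Fin r → ℕ)) : σr r →₀ ℕ :=
  if h : ∃ m : σr r →₀ ℕ, rowm m = e.1 ∧ colm m = e.2 then h.choose else 0

noncomputable def nf (m : σr r →₀ ℕ) : σr r →₀ ℕ := canonical (rowm m, colm m)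

lemma nf_spec (m : σr r →₀ ℕ) : rowm (nf m) = rowm m ∧ colm (nf m) = colm m := by
  unfold nf canonical
  split
  · next h => exact h.choose_spec
  · next h => exact absurd ⟨m, rfl, rfl⟩ h

variable (k) in
/-- the Segre parametrization map -/
noncomputable def φmap : MvPolynomial (σr r) k →ₐ[k] MvPolynomial (Fin 3 ⊕ Fin r) k :=
  aeval fun s => X (Sum.inl (row s)) * X (Sum.inr (col s))

/-- encoding marginals as an exponent over `Fin 3 ⊕ Fin r` -/
noncomputable def E (e : (Fin 3 → ℕ) × (Fin r → ℕ)) : (Fin 3 ⊕ Fin r) →₀ ℕ :=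
  Finsupp.equivFunOnFinite.symm (Sum.elim e.1 e.2)

@[simp] lemma E_inl (e : (Fin 3 → ℕ) × (Fin r → ℕ)) (i : Fin 3) :
    E (r := r) e (Sum.inl i) = e.1 i := by simp [E]
@[simp] lemma E_inr (e : (Fin 3 → ℕ) × (Fin r → ℕ)) (j : Fin r) :
    E (r := r) e (Sum.inr j) = e.2 j := by simp [E]

lemma φ_monomial (m : σr r →₀ ℕ) (c : k) :
    φmap k (monomial m c) = monomial (E (rowm m, colm m)) c := by
  induction m using Finsupp.induction generalizing c with
  | zero =>
    have hE : E (r := r) (rowm (0 : σr r →₀ ℕ), colm (0 : σr r →₀ ℕ)) = 0 := by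
      ext t
      rcases t with i | j
      · rw [E_inl]; simp [rowm]
      · rw [E_inr]; simp [colm]
    rw [hE, monomial_zero', monomial_zero']
    simp [φmap]
  | single_add s e m hs he ih =>
    rw [monomial_single_add, map_mul, map_pow]
    have hX : φmap k (X s : MvPolynomial (σr r) k) =
        monomial (Finsupp.single (Sum.inl (row s)) 1 + Finsupp.single (Sum.inr (col s)) 1) 1 := by
      rw [φmap, aeval_X, X, X, monomial_mul, one_mul]
    rw [hX, ih, monomial_pow, monomial_mul, one_pow, one_mul]
    have hexp : e • ((Finsupp.single (Sum.inl (row s)) 1 : (Fin 3 ⊕ Fin r) →₀ ℕ) +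
        Finsupp.single (Sum.inr (col s)) 1) + E (rowm m, colm m) =
        E (rowm (Finsupp.single s e + m), colm (Finsupp.single s e + m)) := by
      ext t
      rcases t with i | j
      · rw [Finsupp.add_apply, Finsupp.smul_apply, Finsupp.add_apply, E_inl, E_inl]
        rw [show (rowm (Finsupp.single s e + m), colm (Finsupp.single s e + m)).1 =
          rowm (Finsupp.single s e + m) from rfl]
        rw [rowm_add', rowm_single']
        rw [Finsupp.single_apply, Finsupp.single_apply]
        simp only [Sum.inl.injEq, reduceCtorEq, if_false, add_zero, smul_eq_mul]
        by_cases h : row s = i <;> simp [h]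
      · rw [Finsupp.add_apply, Finsupp.smul_apply, Finsupp.add_apply, E_inr, E_inr]
        rw [show (rowm (Finsupp.single s e + m), colm (Finsupp.single s e + m)).2 =
          colm (Finsupp.single s e + m) from rfl]
        rw [colm_add', colm_single']
        rw [Finsupp.single_apply, Finsupp.single_apply]
        simp only [Sum.inr.injEq, reduceCtorEq, if_false, zero_add, smul_eq_mul]
        by_cases h : col s = j <;> simp [h]
    rw [hexp]

/-- the left inverse on the level of linear data -/
noncomputable def χmap (g : MvPolynomial (Fin 3 ⊕ Fin r) k) : MvPolynomial (σr r) k :=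
  Finsupp.sum (AddMonoidAlgebra.coeff g) fun n c =>
    monomial (canonical (fun i => n (Sum.inl i), fun j => n (Sum.inr j))) c

/-- the monomial-wise normal form -/
noncomputable def nfMap (f : MvPolynomial (σr r) k) : MvPolynomial (σr r) k :=
  Finsupp.sum (AddMonoidAlgebra.coeff f) fun m c => monomial (nf m) c

lemma χ_zero : χmap (0 : MvPolynomial (Fin 3 ⊕ Fin r) k) = 0 := Finsupp.sum_zero_index

lemma χ_add (g g' : MvPolynomial (Fin 3 ⊕ Fin r) k) : χmap (g + g') = χmap g + χmap g' :=
  Finsupp.sum_add_index' (fun n => by simp) (fun n b1 b2 => by rw [← map_add])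

lemma χ_monomial (n : (Fin 3 ⊕ Fin r) →₀ ℕ) (c : k) : χmap (monomial n c) =
    monomial (canonical (fun i => n (Sum.inl i), fun j => n (Sum.inr j))) c :=
  Finsupp.sum_single_index (by simp)

lemma nfMap_zero : nfMap (0 : MvPolynomial (σr r) k) = 0 := Finsupp.sum_zero_index

lemma nfMap_add (p q : MvPolynomial (σr r) k) : nfMap (p + q) = nfMap p + nfMap q :=
  Finsupp.sum_add_index' (fun n => by simp) (fun n b1 b2 => by rw [← map_add])

lemma nfMap_monomial (u : σr r →₀ ℕ) (a : k) : nfMap (monomial u a) = monomial (nf u) a :=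
  Finsupp.sum_single_index (by simp)

lemma chi_phi (f : MvPolynomial (σr r) k) : χmap (φmap k f) = nfMap f := by
  induction f using MvPolynomial.induction_on' with
  | monomial u a =>
    rw [φ_monomial, χ_monomial, nfMap_monomial]
    have hdec : ((fun i => E (r := r) (rowm u, colm u) (Sum.inl i)),
        (fun j => E (r := r) (rowm u, colm u) (Sum.inr j))) = (rowm u, colm u) := by
      rw [Prod.mk.injEq]
      exact ⟨funext fun i => E_inl _ _, funext fun j => E_inr _ _⟩
    rw [hdec]
    rfl
  | add p q ihp ihq =>
    rw [map_add, χ_add, nfMap_add, ihp, ihq]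

lemma sub_nfMap_mem (f : MvPolynomial (σr r) k) : f - nfMap f ∈ P2ideal k r := by
  induction f using MvPolynomial.induction_on' with
  | monomial u a =>
    rw [nfMap_monomial]
    have hc1 : (monomial u a : MvPolynomial (σr r) k) = C a * monomial u 1 := by
      rw [C_mul_monomial, mul_one]
    have hc2 : (monomial (nf u) a : MvPolynomial (σr r) k) = C a * monomial (nf u) 1 := by
      rw [C_mul_monomial, mul_one]
    rw [hc1, hc2, ← mul_sub]
    exact Ideal.mul_mem_left _ _
      (swap_conn (D u (nf u)) u (nf u) le_rfl (nf_spec u).1.symm (nf_spec u).2.symm)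
  | add p q ihp ihq =>
    rw [nfMap_add, show p + q - (nfMap p + nfMap q) = (p - nfMap p) + (q - nfMap q) from by ring]
    exact add_mem ihp ihq

lemma P2_le_ker : P2ideal k r ≤ RingHom.ker (φmap k (r := r)).toRingHom := by
  rw [P2ideal, Ideal.span_le]
  rintro f ⟨ℓ, ℓ', h, hf | hf | hf⟩ <;> subst hf <;>
    · simp only [SetLike.mem_coe, RingHom.mem_ker, AlgHom.toRingHom_eq_coe,
        RingHom.coe_coe, map_sub, map_mul, φmap, aeval_X, row, col, Sum.elim_inl, Sum.elim_inr]
      ring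

lemma ker_le_P2 : RingHom.ker (φmap k (r := r)).toRingHom ≤ P2ideal k r := by
  intro f hf
  rw [RingHom.mem_ker] at hf
  have h1 := sub_nfMap_mem f
  have h2 : nfMap f = 0 := by
    rw [← chi_phi]
    simp only [AlgHom.toRingHom_eq_coe, RingHom.coe_coe] at hf
    rw [hf, χ_zero]
  rwa [h2, sub_zero] at h1

lemma P2_eq_ker : P2ideal k r = RingHom.ker (φmap k (r := r)).toRingHom :=
  le_antisymm P2_le_ker ker_le_P2

lemma P2_prime [IsDomain k] : (P2ideal k r).IsPrime := by
  rw [P2_eq_ker]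
  exact RingHom.ker_isPrime _

end NormalForm
section P1

variable (k) in
noncomputable def ψmap : MvPolynomial (σr r) k →ₐ[k] MvPolynomial (Fin r ⊕ Fin r) k :=
  aeval (Sum.elim (fun ℓ => X (Sum.inl ℓ)) (Sum.elim (fun _ => 0) (fun ℓ => X (Sum.inr ℓ))))

variable (k) in
noncomputable def θmap : MvPolynomial (Fin r ⊕ Fin r) k →ₐ[k] MvPolynomial (σr r) k :=
  aeval (Sum.elim (fun ℓ => X (Sum.inl ℓ)) (fun ℓ => X (Sum.inr (Sum.inr ℓ))))

lemma sub_theta_psi_mem_P1 (f : MvPolynomial (σr r) k) :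
    f - θmap k (ψmap k f) ∈ P1ideal k r := by
  induction f using MvPolynomial.induction_on with
  | C c =>
    have : (C c : MvPolynomial (σr r) k) - θmap k (ψmap k (C c)) = 0 := by
      simp [ψmap, θmap]
    rw [this]; exact zero_mem _
  | add p q hp hq =>
    have : p + q - θmap k (ψmap k (p + q)) =
        (p - θmap k (ψmap k p)) + (q - θmap k (ψmap k q)) := by
      rw [map_add, map_add]; ring
    rw [this]; exact add_mem hp hq
  | mul_X p s hp =>
    have key : X s - θmap k (ψmap k (X s)) ∈ P1ideal k r := by
      rcases s with ℓ | s
      · have : (X (Sum.inl ℓ) : MvPolynomial (σr r) k) - θmap k (ψmap k (X (Sum.inl ℓ))) = 0 := by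
          simp [ψmap, θmap]
        rw [this]; exact zero_mem _
      · rcases s with ℓ | ℓ
        · have : (X (Sum.inr (Sum.inl ℓ)) : MvPolynomial (σr r) k) -
              θmap k (ψmap k (X (Sum.inr (Sum.inl ℓ)))) = X (Sum.inr (Sum.inl ℓ)) := by
            simp [ψmap, θmap]
          rw [this]; exact y_mem_P1 ℓ
        · have : (X (Sum.inr (Sum.inr ℓ)) : MvPolynomial (σr r) k) -
              θmap k (ψmap k (X (Sum.inr (Sum.inr ℓ)))) = 0 := by
            simp [ψmap, θmap]
          rw [this]; exact zero_mem _
    have hsplit : p * X s - θmap k (ψmap k (p * X s)) =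
        (p - θmap k (ψmap k p)) * X s + θmap k (ψmap k p) * (X s - θmap k (ψmap k (X s))) := by
      rw [map_mul, map_mul]; ring
    rw [hsplit]
    exact add_mem (Ideal.mul_mem_right _ _ hp) (Ideal.mul_mem_left _ _ key)

lemma P1_eq_ker : P1ideal k r = RingHom.ker (ψmap k (r := r)).toRingHom := by
  apply le_antisymm
  · rw [P1ideal, Ideal.span_le]
    rintro f ⟨m, rfl⟩
    simp [RingHom.mem_ker, ψmap]
  · intro f hf
    rw [RingHom.mem_ker] at hf
    have h := sub_theta_psi_mem_P1 (k := k) f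
    simp only [AlgHom.toRingHom_eq_coe, RingHom.coe_coe] at hf
    rwa [hf, map_zero, sub_zero] at h

lemma P1_prime [IsDomain k] : (P1ideal k r).IsPrime := by
  rw [P1_eq_ker]; exact RingHom.ker_isPrime _

end P1
end StmtAux

/-- For `r ≥ 2`: the radical of `I_r` equals `P_1 ∩ P_2`, `P_1` is prime, neither of
`P_1 ⊆ P_2` and `P_2 ⊆ P_1` holds, and consequently the radical of `I_r` is not prime
(the variety `Y_r(U_4/Γ_3)` is the non-trivial union of two irreducible closed
subvarieties). -/
theorem stmt_14 (k : Type*) [Field k] [IsAlgClosed k] (p : ℕ) (hp : p.Prime)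
    (hp2 : 2 < p) [CharP k p] (r : ℕ) (hr : 2 ≤ r) :
    (Iideal k r).radical = P1ideal k r ⊓ P2ideal k r ∧
    (P1ideal k r).IsPrime ∧
    ¬ (P1ideal k r ≤ P2ideal k r) ∧
    ¬ (P2ideal k r ≤ P1ideal k r) ∧
    ¬ ((Iideal k r).radical).IsPrime := by
  classical
  have hP1 : (P1ideal k r).IsPrime := StmtAux.P1_prime
  have hP2 : (P2ideal k r).IsPrime := StmtAux.P2_prime
  have h0r : (0 : ℕ) < r := by omega
  have h1r : (1 : ℕ) < r := hr
  set ℓ0 : Fin r := ⟨0, h0r⟩ with hℓ0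
  set ℓ1 : Fin r := ⟨1, h1r⟩ with hℓ1
  have hℓ01 : ℓ0 < ℓ1 := by rw [hℓ0, hℓ1, Fin.mk_lt_mk]; omega
  have hℓ10 : ℓ1 ≠ ℓ0 := by rw [hℓ0, hℓ1]; intro h; simpa using congrArg Fin.val h
  have hne : ¬ P1ideal k r ≤ P2ideal k r := by
    intro hle
    have hy := hle (StmtAux.y_mem_P1 (k := k) ℓ0)
    have hker : P2ideal k r ≤ RingHom.ker (eval (fun _ => (1 : k))) := by
      rw [P2ideal, Ideal.span_le]
      rintro f ⟨a, b, h, hf | hf | hf⟩ <;> subst hf <;> simp [RingHom.mem_ker]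
    have := hker hy
    rw [RingHom.mem_ker] at this
    simp at this
  have hne2 : ¬ P2ideal k r ≤ P1ideal k r := by
    intro hle
    have hx : X (Sum.inl ℓ0) * X (Sum.inr (Sum.inr ℓ1)) -
        X (Sum.inl ℓ1) * X (Sum.inr (Sum.inr ℓ0)) ∈ P2ideal k r :=
      Ideal.subset_span ⟨ℓ0, ℓ1, hℓ01, Or.inr (Or.inr rfl)⟩
    have hv := hle hx
    set v : Fin r ⊕ (Fin r ⊕ Fin r) → k := Sum.elim (fun ℓ => if ℓ = ℓ0 then 1 else 0)
      (Sum.elim (fun _ => 0) (fun ℓ => if ℓ = ℓ1 then 1 else 0)) with hvdef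
    have hker : P1ideal k r ≤ RingHom.ker (eval v) := by
      rw [P1ideal, Ideal.span_le]
      rintro f ⟨m, rfl⟩
      simp [RingHom.mem_ker, hvdef]
    have := hker hv
    rw [RingHom.mem_ker] at this
    simp [hvdef, hℓ10] at this
  have hrad : (Iideal k r).radical = P1ideal k r ⊓ P2ideal k r := by
    apply le_antisymm
    · refine le_inf ?_ ?_
      · calc (Iideal k r).radical ≤ (P1ideal k r).radical :=
              Ideal.radical_mono StmtAux.I_le_P1
          _ = P1ideal k r := hP1.radical
      · calc (Iideal k r).radical ≤ (P2ideal k r).radical :=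
              Ideal.radical_mono StmtAux.I_le_P2
          _ = P2ideal k r := hP2.radical
    · intro f hf
      obtain ⟨hf1, hf2⟩ := Submodule.mem_inf.mp hf
      exact ⟨2, by rw [pow_two]; exact StmtAux.P1_mul_P2_le_I (Ideal.mul_mem_mul hf1 hf2)⟩
  refine ⟨hrad, hP1, hne, hne2, ?_⟩
  intro hpr
  rw [hrad] at hpr
  have hmul : P1ideal k r * P2ideal k r ≤ P1ideal k r ⊓ P2ideal k r :=
    le_inf Ideal.mul_le_left Ideal.mul_le_right
  rcases hpr.mul_le.mp hmul with h | h
  · exact hne (h.trans inf_le_right)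
  · exact hne2 (h.trans inf_le_left)
end

section
/- Assume r ≥ 2. The Krull dimension of the ring C_r/I_r equals 2r. -/
open MvPolynomial

set_option maxHeartbeats 1000000
set_option synthInstance.maxHeartbeats 200000

open MvPolynomial

lemma finsupp_apply_le_sum (v : ℕ →₀ ℕ) : True := trivial

lemma apply_le_total {σ : Type*} {R : Type*} [CommSemiring R] {p : MvPolynomial σ R}
    {s : σ →₀ ℕ} (h : s ∈ p.support) (i : σ) : s i ≤ p.totalDegree := by
  refine le_trans ?_ (le_totalDegree h)
  classical
  by_cases hi : i ∈ s.support
  · exact Finset.single_le_sum (f := fun j => s j) (fun _ _ => Nat.zero_le _) hi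
  · simp [Finsupp.notMem_support_iff.mp hi]

lemma aeval_mem_span_box {k A ι : Type*} [Field k] [CommRing A] [Algebra k A] [Fintype ι]
    (w : ι → A) (M : ℕ) (Q : MvPolynomial ι k) (hQ : Q.totalDegree ≤ M) :
    aeval w Q ∈ Submodule.span k (Set.range fun β : ι → Fin (M+1) => ∏ i, w i ^ (β i : ℕ)) := by
  have hrw : aeval w Q = ∑ v ∈ Q.support, aeval w (monomial v (coeff v Q)) := by
    conv_lhs => rw [Q.as_sum]
    rw [map_sum]
  rw [hrw]
  refine Submodule.sum_mem _ fun v hv => ?_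
  rw [aeval_monomial, ← Algebra.smul_def]
  refine Submodule.smul_mem _ _ (Submodule.subset_span ?_)
  refine ⟨fun i => ⟨v i, Nat.lt_succ_of_le (le_trans (apply_le_total hv i) hQ)⟩, ?_⟩
  rw [Finsupp.prod_pow]

lemma card_le_of_algIndep {k A : Type*} {ι : Type} [Field k] [CommRing A] [IsDomain A] [Algebra k A]
    [Fintype ι] {m : ℕ} (w : ι → A) (b : A) (hb : b ≠ 0)
    (B0 : MvPolynomial ι k) (hB0 : aeval w B0 = b)
    (g : Fin m → A) (hg : AlgebraicIndependent k g)
    (hP : ∀ i, ∃ (c : ℕ) (P : MvPolynomial ι k), b ^ c * g i = aeval w P) :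
    m ≤ Fintype.card ι := by
  by_contra hmN
  push_neg at hmN
  set N : ℕ := Fintype.card ι with hN
  choose c P hcP using hP
  classical
  set cm : ℕ := Finset.univ.sup c with hcm
  set D : ℕ := max (max (Finset.univ.sup fun i => (P i).totalDegree) B0.totalDegree) 1 with hD
  have hD1 : 1 ≤ D := le_max_right _ _
  have hB0deg : B0.totalDegree ≤ D := le_trans (le_max_right _ _) (le_max_left _ _)
  have hPdeg : ∀ i, (P i).totalDegree ≤ D := by
    intro i
    have h1 : (P i).totalDegree ≤ Finset.univ.sup fun j => (P j).totalDegree :=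
      Finset.le_sup (f := fun j => (P j).totalDegree) (Finset.mem_univ i)
    have h2 : (Finset.univ.sup fun j => (P j).totalDegree) ≤ D :=
      le_trans (le_max_left _ _) (le_max_left _ _)
    exact le_trans h1 h2
  have hc : ∀ i, c i ≤ cm := fun i => Finset.le_sup (Finset.mem_univ i)
  -- uniform exponent version
  set R : Fin m → MvPolynomial ι k := fun i => B0 ^ (cm - c i) * P i with hR
  have hRval : ∀ i, b ^ cm * g i = aeval w (R i) := by
    intro i
    have : b ^ cm = b ^ (cm - c i) * b ^ (c i) := by
      rw [← pow_add, Nat.sub_add_cancel (hc i)]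
    rw [hR, map_mul, map_pow, hB0, this, mul_assoc, hcP i]
  have hRdeg : ∀ i, (R i).totalDegree ≤ (cm + 1) * D := by
    intro i
    refine le_trans (totalDegree_mul _ _) ?_
    refine le_trans (add_le_add (totalDegree_pow _ _) le_rfl) ?_
    calc (cm - c i) * B0.totalDegree + (P i).totalDegree
        ≤ cm * D + 1 * D := add_le_add
          (Nat.mul_le_mul (Nat.sub_le _ _) hB0deg) (by simpa using hPdeg i)
      _ = (cm + 1) * D := by ring
  set E : ℕ := D * (2 * cm + 2) with hE
  -- key: products are aeval of bounded-degree polynomials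
  have key : ∀ (d : ℕ) (α : Fin m → ℕ), (∑ i, α i) ≤ d →
      ∃ Q : MvPolynomial ι k, Q.totalDegree ≤ d * E ∧
        b ^ (cm * d) * ∏ i, g i ^ α i = aeval w Q := by
    intro d α hα
    refine ⟨B0 ^ (cm * (d - ∑ i, α i)) * ∏ i, (R i) ^ α i, ?_, ?_⟩
    · refine le_trans (totalDegree_mul _ _) ?_
      have h1 : (B0 ^ (cm * (d - ∑ i, α i))).totalDegree ≤ cm * d * D :=
        le_trans (totalDegree_pow _ _) (by
          refine Nat.mul_le_mul ?_ hB0deg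
          exact Nat.mul_le_mul_left _ (Nat.sub_le _ _))
      have h2 : (∏ i, (R i) ^ α i).totalDegree ≤ d * ((cm + 1) * D) := by
        refine le_trans (totalDegree_finset_prod _ _) ?_
        calc ∑ i, ((R i) ^ α i).totalDegree
            ≤ ∑ i, α i * ((cm + 1) * D) := Finset.sum_le_sum fun i _ =>
              le_trans (totalDegree_pow _ _) (Nat.mul_le_mul_left _ (hRdeg i))
          _ = (∑ i, α i) * ((cm + 1) * D) := by rw [Finset.sum_mul]
          _ ≤ d * ((cm + 1) * D) := Nat.mul_le_mul_right _ hα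
      calc (B0 ^ (cm * (d - ∑ i, α i))).totalDegree + (∏ i, (R i) ^ α i).totalDegree
          ≤ cm * d * D + d * ((cm + 1) * D) := add_le_add h1 h2
        _ = d * D * (2 * cm + 1) := by ring
        _ ≤ d * D * (2 * cm + 2) := Nat.mul_le_mul_left _ (by omega)
        _ = d * E := by rw [hE]; ring
    · have hsplit : b ^ (cm * d) = b ^ (cm * (d - ∑ i, α i)) * b ^ (cm * ∑ i, α i) := by
        rw [← pow_add, ← Nat.mul_add, Nat.sub_add_cancel hα]
      have hprod : ∏ i, (b ^ cm * g i) ^ α i = b ^ (cm * ∑ i, α i) * ∏ i, g i ^ α i := by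
        rw [Finset.mul_sum, ← Finset.prod_pow_eq_pow_sum, ← Finset.prod_mul_distrib]
        exact Finset.prod_congr rfl fun i _ => by rw [mul_pow, pow_mul]
      rw [map_mul, map_pow, hB0, map_prod]
      rw [hsplit, mul_assoc, ← hprod]
      congr 1
      exact Finset.prod_congr rfl fun i _ => by rw [map_pow, ← hRval i]
  -- for each q, cardinality inequality
  have main : ∀ q : ℕ, (q + 1) ^ m ≤ (m * q * E + 1) ^ N := by
    intro q
    set d : ℕ := m * q with hd
    set V : Submodule k A := Submodule.span k
      (Set.range fun β : ι → Fin (d * E + 1) => ∏ i, w i ^ (β i : ℕ)) with hV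
    have hmem : ∀ β : Fin m → Fin (q + 1), b ^ (cm * d) * ∏ i, g i ^ (β i : ℕ) ∈ V := by
      intro β
      obtain ⟨Q, hQdeg, hQval⟩ := key d (fun i => (β i : ℕ)) (by
        calc ∑ i, ((β i : ℕ)) ≤ ∑ _i : Fin m, q :=
              Finset.sum_le_sum fun i _ => Nat.lt_succ_iff.mp (β i).isLt
          _ = m * q := by simp [Finset.sum_const, mul_comm]
        )
      rw [hQval]
      exact aeval_mem_span_box w (d * E) Q hQdeg
    -- linear independence of the family
    set F : (Fin m → Fin (q + 1)) → A := fun β => b ^ (cm * d) * ∏ i, g i ^ (β i : ℕ) with hF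
    have hFind : LinearIndependent k F := by
      have hinj : Function.Injective ((LinearMap.mulLeft k (b ^ (cm * d))) ∘ₗ
          (aeval g).toLinearMap) := by
        refine Function.Injective.comp (g := LinearMap.mulLeft k (b ^ (cm * d))) ?_ ?_
        · intro x y hxy
          exact mul_left_cancel₀ (pow_ne_zero _ hb) hxy
        · exact algebraicIndependent_iff_injective_aeval.mp hg
      have h1 : LinearIndependent k (fun α : Fin m →₀ ℕ =>
          ((LinearMap.mulLeft k (b ^ (cm * d))) ∘ₗ (aeval g).toLinearMap)
            (MvPolynomial.monomial α 1)) := by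
        have := (MvPolynomial.basisMonomials (Fin m) k).linearIndependent
        rw [coe_basisMonomials] at this
        exact this.map' _ (LinearMap.ker_eq_bot.mpr hinj)
      have h2 := h1.comp (fun β : Fin m → Fin (q + 1) =>
          (Finsupp.equivFunOnFinite.symm (fun i => (β i : ℕ)))) (by
        intro β₁ β₂ hβ
        have := Finsupp.equivFunOnFinite.symm.injective hβ
        funext i
        exact Fin.val_injective (congrFun this i))
      convert h2 using 1
      funext β
      simp only [hF, Function.comp, LinearMap.coe_comp, AlgHom.toLinearMap_apply,
        LinearMap.mulLeft_apply]
      congr 1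
      rw [aeval_monomial, Finsupp.prod_pow]
      simp [Finsupp.equivFunOnFinite]
  -- cardinality count
    have hFV : LinearIndependent k (fun β : Fin m → Fin (q+1) => (⟨F β, hmem β⟩ : V)) := by
      apply LinearIndependent.of_comp V.subtype
      exact hFind
    have h1 := hFV.cardinal_lift_le_rank
    have h2 := Cardinal.lift_le.{0}.mpr
      (rank_span_le (R := k) (s := Set.range fun β : ι → Fin (d * E + 1) =>
        ∏ i, w i ^ (β i : ℕ)))
    have h2b := Cardinal.mk_range_le_lift (f := fun β : ι → Fin (d * E + 1) =>
      ∏ i, w i ^ (β i : ℕ))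
    have h3 := le_trans h1 (le_trans h2 h2b)
    rw [Cardinal.mk_fintype, Cardinal.mk_fintype] at h3
    simp only [Fintype.card_fun, Fintype.card_fin, Cardinal.lift_natCast] at h3
    exact_mod_cast h3
  -- final arithmetic contradiction
  set K : ℕ := E * m + 1 with hK
  set q : ℕ := K ^ N + 1 with hq
  have hq1 : 1 ≤ q := by rw [hq]; exact Nat.le_add_left 1 _
  have h1 : (q + 1) ^ m ≤ (m * q * E + 1) ^ N := main q
  have h2 : m * q * E + 1 ≤ K * q := by
    calc m * q * E + 1 ≤ E * m * q + q := by
          refine add_le_add (le_of_eq (by ring)) hq1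
      _ = K * q := by rw [hK]; ring
  have h3 : (q + 1) ^ m ≤ K ^ N * q ^ N :=
    le_trans h1 (le_trans (Nat.pow_le_pow_left h2 N) (by rw [mul_pow]))
  have h4 : q ^ N * (q + 1) ≤ (q + 1) ^ m := by
    calc q ^ N * (q + 1) ≤ (q + 1) ^ N * (q + 1) :=
          Nat.mul_le_mul_right _ (Nat.pow_le_pow_left (Nat.le_succ _) _)
      _ = (q + 1) ^ (N + 1) := by rw [pow_succ]
      _ ≤ (q + 1) ^ m := Nat.pow_le_pow_right (by omega) (by omega)
  have h5 : q ^ N * (q + 1) ≤ q ^ N * K ^ N := by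
    refine le_trans h4 (le_trans h3 (le_of_eq (by ring)))
  have h6 : q + 1 ≤ K ^ N := Nat.le_of_mul_le_mul_left h5 (pow_pos (by omega) N)
  omega

open MvPolynomial

/-- If the images of `t` in `A ⧸ q` are algebraically independent and `f ∈ q` is nonzero,
then `f` together with `t` is algebraically independent in the domain `A`. -/
lemma algIndep_option {k A ι : Type*} [Field k] [CommRing A] [IsDomain A] [Algebra k A]
    (q : Ideal A) (f : A) (hfq : f ∈ q) (hf : f ≠ 0) (t : ι → A)
    (ht : AlgebraicIndependent k (fun i => Ideal.Quotient.mk q (t i))) :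
    AlgebraicIndependent k (fun o : Option ι => o.elim f t) := by
  rw [algebraicIndependent_iff]
  intro P hP
  set e := optionEquivLeft k ι with he
  set Q : Polynomial (MvPolynomial ι k) := e P with hQ
  have heval : ∀ P' : MvPolynomial (Option ι) k,
      aeval (fun o : Option ι => o.elim f t) P' =
        Polynomial.eval₂ (aeval t).toRingHom f (e P') := by
    intro P'
    have hcomp : (aeval (fun o : Option ι => o.elim f t) :
        MvPolynomial (Option ι) k →ₐ[k] A) =
        ((((Polynomial.aeval f).restrictScalars k).comp
          (Polynomial.mapAlgHom (aeval t))).comp e.toAlgHom) := by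
      apply MvPolynomial.algHom_ext
      intro o
      cases o with
      | none =>
        simp [he, optionEquivLeft_X_none]
      | some i =>
        simp [he, optionEquivLeft_X_some]
    rw [hcomp]
    simp only [AlgHom.comp_apply, AlgEquiv.toAlgHom_eq_coe, AlgHom.coe_coe,
      AlgHom.coe_restrictScalars', Polynomial.coe_mapAlgHom]
    rw [Polynomial.aeval_def, Polynomial.eval₂_map]
    rfl
  have hQ0 : Polynomial.eval₂ (aeval t).toRingHom f Q = 0 := by rw [← heval, hP]
  -- the composed map to the quotient
  have hcompq : (Ideal.Quotient.mk q).comp (aeval t).toRingHom =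
      ((aeval (fun i => Ideal.Quotient.mk q (t i)) :
        MvPolynomial ι k →ₐ[k] A ⧸ q) : MvPolynomial ι k →+* A ⧸ q) := by
    have := MvPolynomial.comp_aeval (R := k) (f := t) (φ := Ideal.Quotient.mkₐ k q)
    have h2 := congrArg (AlgHom.toRingHom) this
    convert h2 using 2
    rfl
    rfl
  have main : ∀ (n : ℕ) (Q' : Polynomial (MvPolynomial ι k)), Q'.natDegree ≤ n →
      Polynomial.eval₂ (aeval t).toRingHom f Q' = 0 → Q' = 0 := by
    intro n
    induction n with
    | zero =>
      intro Q' hdeg hev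
      rw [Polynomial.eq_C_of_natDegree_le_zero hdeg] at hev ⊢
      rw [Polynomial.eval₂_C] at hev
      have : Ideal.Quotient.mk q ((aeval t).toRingHom (Q'.coeff 0)) = 0 := by rw [hev]; simp
      rw [← RingHom.comp_apply, hcompq] at this
      rw [algebraicIndependent_iff] at ht
      rw [ht _ this]
      simp
    | succ n ih =>
      intro Q' hdeg hev
      -- first, the constant coefficient vanishes
      have hc0 : Q'.coeff 0 = 0 := by
        have h1 : Ideal.Quotient.mk q (Polynomial.eval₂ (aeval t).toRingHom f Q') = 0 := by
          rw [hev]; simp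
        rw [Polynomial.hom_eval₂] at h1
        rw [Ideal.Quotient.eq_zero_iff_mem.mpr hfq] at h1
        rw [Polynomial.eval₂_at_zero] at h1
        rw [RingHom.comp_apply, ← RingHom.comp_apply, hcompq] at h1
        rw [algebraicIndependent_iff] at ht
        exact ht _ h1
      have hsplit : Q' = Q'.divX * Polynomial.X := by
        conv_lhs => rw [← Polynomial.divX_mul_X_add Q']
        rw [hc0]
        simp
      have hev2 : Polynomial.eval₂ (aeval t).toRingHom f Q'.divX = 0 := by
        rw [hsplit] at hev
        rw [Polynomial.eval₂_mul, Polynomial.eval₂_X] at hev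
        exact (mul_eq_zero.mp hev).resolve_right hf
      have hdeg2 : Q'.divX.natDegree ≤ n := by
        have := Polynomial.natDegree_divX_eq_natDegree_tsub_one (p := Q')
        omega
      rw [hsplit, ih _ hdeg2 hev2]
      simp
  have hQz : Q = 0 := main Q.natDegree Q le_rfl hQ0
  have := congrArg e.symm hQz
  rw [hQ] at this
  simpa using this

lemma chain_algIndep {k B : Type*} [Field k] [CommRing B] [Algebra k B] :
    ∀ (m : ℕ) (p : ℕ → Ideal B), (∀ i ≤ m, (p i).IsPrime) → (∀ i < m, p i < p (i + 1)) →
    ∃ v : Fin m → B, AlgebraicIndependent k (fun i => Ideal.Quotient.mk (p 0) (v i)) := by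
  intro m
  induction m with
  | zero =>
    intro p hprime _
    haveI := hprime 0 le_rfl
    exact ⟨Fin.elim0, algebraicIndependent_empty_type⟩
  | succ m ih =>
    intro p hprime hlt
    haveI h0prime : (p 0).IsPrime := hprime 0 (by omega)
    haveI h1prime : (p 1).IsPrime := hprime 1 (by omega)
    obtain ⟨v, hv⟩ := ih (fun i => p (i + 1)) (fun i hi => hprime (i + 1) (by omega))
      (fun i hi => hlt (i + 1) (by omega))
    have h01 : p 0 ≤ p 1 := le_of_lt (hlt 0 (by omega))
    set q' : Ideal (B ⧸ p 0) := (p 1).map (Ideal.Quotient.mkₐ k (p 0)) with hq'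
    haveI hq'prime : q'.IsPrime := by
      refine Ideal.map_isPrime_of_surjective (Ideal.Quotient.mkₐ_surjective k _) ?_
      have hker : RingHom.ker (Ideal.Quotient.mkₐ k (p 0)) = p 0 := Ideal.Quotient.mkₐ_ker k (p 0)
      rw [hker]
      exact h01
    obtain ⟨f, hf1, hf0⟩ := SetLike.exists_of_lt (hlt 0 (by omega))
    set fbar : B ⧸ p 0 := Ideal.Quotient.mk (p 0) f with hfbar
    have hfq' : fbar ∈ q' := Ideal.mem_map_of_mem _ hf1
    have hfne : fbar ≠ 0 := fun h => hf0 (Ideal.Quotient.eq_zero_iff_mem.mp h)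
    set t : Fin m → B ⧸ p 0 := fun i => Ideal.Quotient.mk (p 0) (v i) with htdef
    set ε := DoubleQuot.quotQuotEquivQuotOfLEₐ k h01 with hε
    have hεmk : ∀ x : B, ε (Ideal.Quotient.mk q' (Ideal.Quotient.mk (p 0) x)) =
        Ideal.Quotient.mk (p 1) x := fun x => rfl
    have ht : AlgebraicIndependent k (fun i => Ideal.Quotient.mk q' (t i)) := by
      rw [algebraicIndependent_iff_injective_aeval]
      have hv' : Function.Injective (aeval (R := k) (fun i => ε (Ideal.Quotient.mk q' (t i)))) := by
        have heq : (fun i => ε (Ideal.Quotient.mk q' (t i))) =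
            fun i => Ideal.Quotient.mk (p 1) (v i) := funext fun i => hεmk (v i)
        rw [heq]
        exact algebraicIndependent_iff_injective_aeval.mp hv
      have hcomp : (aeval (R := k) (fun i => ε (Ideal.Quotient.mk q' (t i))) :
          MvPolynomial (Fin m) k →ₐ[k] B ⧸ p 1) =
          (ε.toAlgHom).comp (aeval (fun i => Ideal.Quotient.mk q' (t i))) := by
        rw [MvPolynomial.comp_aeval]
        rfl
      rw [hcomp] at hv'
      simp only [AlgHom.coe_comp] at hv'
      exact Function.Injective.of_comp hv'
    have hopt := algIndep_option q' fbar hfq' hfne t ht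
    refine ⟨Fin.cases f v, ?_⟩
    have hcomp2 := hopt.comp (finSuccEquiv m) (Equiv.injective _)
    convert hcomp2 using 1
    funext i
    induction i using Fin.cases with
    | zero => simp [htdef, hfbar]
    | succ j => simp [htdef]
section UpperCases

variable {k : Type*} [Field k] {r : ℕ}

local notation "Cring" => MvPolynomial (Fin r ⊕ (Fin r ⊕ Fin r)) k

-- Case 1: all y-variables are in p₀
lemma repr_case1 (p0 : Ideal Cring) (hy : ∀ ℓ : Fin r, X (Sum.inr (Sum.inl ℓ)) ∈ p0)
    (u : Cring) :
    ∃ P : MvPolynomial (Fin r ⊕ Fin r) k,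
      Ideal.Quotient.mk p0 u = aeval (Sum.elim
        (fun ℓ : Fin r => Ideal.Quotient.mk p0 (X (Sum.inl ℓ)))
        (fun ℓ : Fin r => Ideal.Quotient.mk p0 (X (Sum.inr (Sum.inr ℓ))))) P := by
  set w := Sum.elim
        (fun ℓ : Fin r => Ideal.Quotient.mk p0 (X (Sum.inl ℓ) : Cring))
        (fun ℓ : Fin r => Ideal.Quotient.mk p0 (X (Sum.inr (Sum.inr ℓ)) : Cring)) with hw
  induction u using MvPolynomial.induction_on with
  | C a =>
    refine ⟨C a, ?_⟩
    rw [aeval_C]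
    rfl
  | add u1 u2 h1 h2 =>
    obtain ⟨P1, hP1⟩ := h1
    obtain ⟨P2, hP2⟩ := h2
    exact ⟨P1 + P2, by rw [map_add, map_add, hP1, hP2]⟩
  | mul_X u v hu =>
    obtain ⟨P, hP⟩ := hu
    cases v with
    | inl ℓ =>
      refine ⟨P * X (Sum.inl ℓ), ?_⟩
      rw [map_mul, map_mul, hP, aeval_X]
      rfl
    | inr v' =>
      cases v' with
      | inl ℓ =>
        refine ⟨0, ?_⟩
        rw [map_mul, Ideal.Quotient.eq_zero_iff_mem.mpr (hy ℓ), mul_zero, map_zero]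
      | inr ℓ =>
        refine ⟨P * X (Sum.inr ℓ), ?_⟩
        rw [map_mul, map_mul, hP, aeval_X]
        rfl

-- relations in case 2
lemma rel_xy (p0 : Ideal Cring) (hI : Iideal k r ≤ p0) (ℓ j : Fin r) :
    Ideal.Quotient.mk p0 (X (Sum.inl ℓ) * X (Sum.inr (Sum.inl j))) =
      Ideal.Quotient.mk p0 (X (Sum.inl j) * X (Sum.inr (Sum.inl ℓ))) := by
  rcases lt_trichotomy ℓ j with h | h | h
  · rw [Ideal.Quotient.eq]
    exact hI (Ideal.subset_span ⟨ℓ, j, h, Or.inl rfl⟩)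
  · rw [h]
  · rw [Ideal.Quotient.eq]
    have hmem : X (Sum.inl j) * X (Sum.inr (Sum.inl ℓ)) -
        X (Sum.inl ℓ) * X (Sum.inr (Sum.inl j)) ∈ Iideal k r :=
      Ideal.subset_span ⟨j, ℓ, h, Or.inl rfl⟩
    have := (Iideal k r).neg_mem hmem
    exact hI (by simpa using this)

lemma rel_yz (p0 : Ideal Cring) (hI : Iideal k r ≤ p0) (ℓ j : Fin r) :
    Ideal.Quotient.mk p0 (X (Sum.inr (Sum.inl ℓ)) * X (Sum.inr (Sum.inr j))) =
      Ideal.Quotient.mk p0 (X (Sum.inr (Sum.inl j)) * X (Sum.inr (Sum.inr ℓ))) := by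
  rcases lt_trichotomy ℓ j with h | h | h
  · rw [Ideal.Quotient.eq]
    exact hI (Ideal.subset_span ⟨ℓ, j, h, Or.inr rfl⟩)
  · rw [h]
  · rw [Ideal.Quotient.eq]
    have hmem : X (Sum.inr (Sum.inl j)) * X (Sum.inr (Sum.inr ℓ)) -
        X (Sum.inr (Sum.inl ℓ)) * X (Sum.inr (Sum.inr j)) ∈ Iideal k r :=
      Ideal.subset_span ⟨j, ℓ, h, Or.inr rfl⟩
    have := (Iideal k r).neg_mem hmem
    exact hI (by simpa using this)

end UpperCases
section UpperCases2

variable {k : Type*} [Field k] {r : ℕ}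

local notation "Cring" => MvPolynomial (Fin r ⊕ (Fin r ⊕ Fin r)) k

lemma repr_case2 (p0 : Ideal Cring) (hI : Iideal k r ≤ p0) (j : Fin r) (u : Cring) :
    ∃ (c : ℕ) (P : MvPolynomial (Fin r ⊕ Fin 2) k),
      (Ideal.Quotient.mk p0 (X (Sum.inr (Sum.inl j)))) ^ c * Ideal.Quotient.mk p0 u =
        aeval (Sum.elim
          (fun ℓ : Fin r => Ideal.Quotient.mk p0 (X (Sum.inr (Sum.inl ℓ))))
          (fun i : Fin 2 => if i = 0 then Ideal.Quotient.mk p0 (X (Sum.inl j))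
            else Ideal.Quotient.mk p0 (X (Sum.inr (Sum.inr j))))) P := by
  set b : Cring ⧸ p0 := Ideal.Quotient.mk p0 (X (Sum.inr (Sum.inl j)) : Cring) with hb
  set w : Fin r ⊕ Fin 2 → Cring ⧸ p0 := Sum.elim
          (fun ℓ : Fin r => Ideal.Quotient.mk p0 (X (Sum.inr (Sum.inl ℓ)) : Cring))
          (fun i : Fin 2 => if i = 0 then Ideal.Quotient.mk p0 (X (Sum.inl j) : Cring)
            else Ideal.Quotient.mk p0 (X (Sum.inr (Sum.inr j)) : Cring)) with hw
  have hbw : aeval w (X (Sum.inl j) : MvPolynomial (Fin r ⊕ Fin 2) k) = b := by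
    rw [aeval_X]; simp [hw, hb]
  induction u using MvPolynomial.induction_on with
  | C a =>
    refine ⟨0, C a, ?_⟩
    rw [pow_zero, one_mul, aeval_C]
    rfl
  | add u1 u2 h1 h2 =>
    obtain ⟨c1, P1, hP1⟩ := h1
    obtain ⟨c2, P2, hP2⟩ := h2
    refine ⟨max c1 c2, X (Sum.inl j) ^ (max c1 c2 - c1) * P1 +
      X (Sum.inl j) ^ (max c1 c2 - c2) * P2, ?_⟩
    rw [map_add, mul_add, map_add, map_mul, map_mul, map_pow, map_pow, hbw,
      ← hP1, ← hP2, ← mul_assoc, ← mul_assoc, ← pow_add, ← pow_add,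
      Nat.sub_add_cancel (le_max_left c1 c2), Nat.sub_add_cancel (le_max_right c1 c2)]
  | mul_X u v hu =>
    obtain ⟨c, P, hP⟩ := hu
    cases v with
    | inl ℓ =>
      -- x_ℓ : use b * x̄_ℓ = x̄_j * ȳ_ℓ
      refine ⟨c + 1, P * (X (Sum.inr 0) * X (Sum.inl ℓ)), ?_⟩
      have hrel := rel_xy p0 hI ℓ j
      have h1 : b ^ (c + 1) * Ideal.Quotient.mk p0 (u * X (Sum.inl ℓ)) =
          (b ^ c * Ideal.Quotient.mk p0 u) *
            Ideal.Quotient.mk p0 (X (Sum.inl ℓ) * X (Sum.inr (Sum.inl j))) := by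
        rw [map_mul, map_mul, hb, pow_succ]
        ring
      rw [h1, hP, hrel, map_mul, map_mul (aeval w), map_mul (aeval w), aeval_X, aeval_X]
      simp [hw]
    | inr v' =>
      cases v' with
      | inl ℓ =>
        refine ⟨c, P * X (Sum.inl ℓ), ?_⟩
        rw [map_mul, map_mul, aeval_X, ← mul_assoc, hP]
        simp [hw]
      | inr ℓ =>
        -- z_ℓ : use b * z̄_ℓ = z̄_j * ȳ_ℓ
        refine ⟨c + 1, P * (X (Sum.inr 1) * X (Sum.inl ℓ)), ?_⟩
        have hrel := rel_yz p0 hI j ℓ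
        have h1 : b ^ (c + 1) * Ideal.Quotient.mk p0 (u * X (Sum.inr (Sum.inr ℓ))) =
            (b ^ c * Ideal.Quotient.mk p0 u) *
              Ideal.Quotient.mk p0 (X (Sum.inr (Sum.inl j)) * X (Sum.inr (Sum.inr ℓ))) := by
          rw [map_mul, map_mul, hb, pow_succ]
          ring
        rw [h1, hP, hrel, map_mul, map_mul (aeval w), map_mul (aeval w), aeval_X, aeval_X]
        simp only [hw, Sum.elim_inl, Sum.elim_inr]
        norm_num
        ring

end UpperCases2
section Bounds

variable {k : Type*} [Field k] {r : ℕ}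

local notation "Cring" => MvPolynomial (Fin r ⊕ (Fin r ⊕ Fin r)) k

lemma case1_bound (p0 : Ideal Cring) [p0.IsPrime]
    (hy : ∀ ℓ : Fin r, X (Sum.inr (Sum.inl ℓ)) ∈ p0)
    {m : ℕ} (v : Fin m → Cring)
    (hv : AlgebraicIndependent k (fun i => Ideal.Quotient.mk p0 (v i))) : m ≤ 2 * r := by
  set w : Fin r ⊕ Fin r → Cring ⧸ p0 := Sum.elim
        (fun ℓ : Fin r => Ideal.Quotient.mk p0 (X (Sum.inl ℓ) : Cring))
        (fun ℓ : Fin r => Ideal.Quotient.mk p0 (X (Sum.inr (Sum.inr ℓ)) : Cring)) with hw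
  have := card_le_of_algIndep (ι := Fin r ⊕ Fin r) w 1 one_ne_zero 1 (map_one _)
    (fun i => Ideal.Quotient.mk p0 (v i)) hv (fun i => by
      obtain ⟨P, hP⟩ := repr_case1 p0 hy (v i)
      exact ⟨0, P, by rw [pow_zero, one_mul]; exact hP⟩)
  simpa [Fintype.card_sum, two_mul] using this

lemma case2_bound (p0 : Ideal Cring) [p0.IsPrime] (hI : Iideal k r ≤ p0)
    (j : Fin r) (hj : X (Sum.inr (Sum.inl j)) ∉ p0)
    {m : ℕ} (v : Fin m → Cring)
    (hv : AlgebraicIndependent k (fun i => Ideal.Quotient.mk p0 (v i))) : m ≤ r + 2 := by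
  set w : Fin r ⊕ Fin 2 → Cring ⧸ p0 := Sum.elim
          (fun ℓ : Fin r => Ideal.Quotient.mk p0 (X (Sum.inr (Sum.inl ℓ)) : Cring))
          (fun i : Fin 2 => if i = 0 then Ideal.Quotient.mk p0 (X (Sum.inl j) : Cring)
            else Ideal.Quotient.mk p0 (X (Sum.inr (Sum.inr j)) : Cring)) with hw
  have hb0 : (Ideal.Quotient.mk p0 (X (Sum.inr (Sum.inl j)) : Cring)) ≠ 0 := by
    intro h
    exact hj (Ideal.Quotient.eq_zero_iff_mem.mp h)
  have hB0 : aeval w (X (Sum.inl j) : MvPolynomial (Fin r ⊕ Fin 2) k) =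
      Ideal.Quotient.mk p0 (X (Sum.inr (Sum.inl j)) : Cring) := by
    rw [aeval_X]; simp [hw]
  have := card_le_of_algIndep (ι := Fin r ⊕ Fin 2) w _ hb0 (X (Sum.inl j)) hB0
    (fun i => Ideal.Quotient.mk p0 (v i)) hv (fun i => repr_case2 p0 hI j (v i))
  simpa [Fintype.card_sum] using this

lemma upper_bound (hr : 2 ≤ r) :
    ringKrullDim (Cring ⧸ Iideal k r) ≤ ((2 * r : ℕ) : WithBot ℕ∞) := by
  rw [ringKrullDim]
  refine iSup_le fun σ => ?_
  suffices h : σ.length ≤ 2 * r by exact_mod_cast h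
  set n := σ.length with hn
  set q : ℕ → Ideal Cring := fun i =>
    Ideal.comap (Ideal.Quotient.mk (Iideal k r)) (σ.toFun ⟨min i n, by omega⟩).asIdeal with hq
  have hqprime : ∀ i ≤ n, (q i).IsPrime := fun i _ => by
    rw [hq]
    exact Ideal.IsPrime.comap _
  have hqlt : ∀ i < n, q i < q (i + 1) := by
    intro i hi
    have hlt : σ.toFun ⟨min i n, by omega⟩ < σ.toFun ⟨min (i+1) n, by omega⟩ := by
      apply σ.strictMono
      simp only [Fin.mk_lt_mk]
      omega
    rw [← PrimeSpectrum.asIdeal_lt_asIdeal] at hlt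
    have hmono : Monotone (Ideal.comap (Ideal.Quotient.mk (Iideal k r)) :
        Ideal (Cring ⧸ Iideal k r) → Ideal Cring) := fun _ _ h => Ideal.comap_mono h
    exact hmono.strictMono_of_injective
      (Ideal.comap_injective_of_surjective _ Ideal.Quotient.mk_surjective) hlt
  have hqI : Iideal k r ≤ q 0 := by
    rw [hq]
    exact le_trans (le_of_eq Ideal.mk_ker.symm) (Ideal.ker_le_comap _)
  obtain ⟨v, hv⟩ := chain_algIndep (k := k) n q hqprime hqlt
  haveI : (q 0).IsPrime := hqprime 0 (by omega)
  by_cases hcase : ∀ ℓ : Fin r, X (Sum.inr (Sum.inl ℓ)) ∈ q 0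
  · exact case1_bound (q 0) hcase v hv
  · push_neg at hcase
    obtain ⟨j, hj⟩ := hcase
    have := case2_bound (q 0) hqI j hj v hv
    omega

end Bounds
section Lower

variable {k : Type*} [Field k] {r : ℕ}

local notation "Cring" => MvPolynomial (Fin r ⊕ (Fin r ⊕ Fin r)) k

/-- substitution killing the `y`'s, the first `min i r` of the `x`'s and
the first `i - r` of the `z`'s -/
noncomputable def substL (k : Type*) [Field k] (r : ℕ) (i : ℕ) :
    (Fin r ⊕ (Fin r ⊕ Fin r)) → MvPolynomial (Fin r ⊕ (Fin r ⊕ Fin r)) k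
  | Sum.inl ℓ => if (ℓ : ℕ) < i then 0 else X (Sum.inl ℓ)
  | Sum.inr (Sum.inl _) => 0
  | Sum.inr (Sum.inr ℓ) => if r + (ℓ : ℕ) < i then 0 else X (Sum.inr (Sum.inr ℓ))

noncomputable def phiL (k : Type*) [Field k] (r : ℕ) (i : ℕ) :
    MvPolynomial (Fin r ⊕ (Fin r ⊕ Fin r)) k →ₐ[k] MvPolynomial (Fin r ⊕ (Fin r ⊕ Fin r)) k :=
  aeval (substL k r i)

noncomputable def pL (k : Type*) [Field k] (r : ℕ) (i : ℕ) :
    Ideal (MvPolynomial (Fin r ⊕ (Fin r ⊕ Fin r)) k) :=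
  RingHom.ker (phiL k r i)

lemma pL_prime (i : ℕ) : (pL k r i).IsPrime := RingHom.ker_isPrime _

lemma phiL_X (i : ℕ) (v : Fin r ⊕ (Fin r ⊕ Fin r)) :
    phiL k r i (X v) = substL k r i v := aeval_X _ _

lemma substL_x (i : ℕ) (ℓ : Fin r) :
    substL k r i (Sum.inl ℓ) = if (ℓ : ℕ) < i then 0 else X (Sum.inl ℓ) := rfl

lemma substL_y (i : ℕ) (ℓ : Fin r) : substL k r i (Sum.inr (Sum.inl ℓ)) = 0 := rfl

lemma substL_z (i : ℕ) (ℓ : Fin r) :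
    substL k r i (Sum.inr (Sum.inr ℓ)) =
      if r + (ℓ : ℕ) < i then 0 else X (Sum.inr (Sum.inr ℓ)) := rfl

lemma phiL_comp (i : ℕ) : (phiL k r (i + 1)).comp (phiL k r i) = phiL k r (i + 1) := by
  apply MvPolynomial.algHom_ext
  intro v
  rw [AlgHom.comp_apply]
  show phiL k r (i+1) (aeval (substL k r i) (X v)) = aeval (substL k r (i+1)) (X v)
  rw [aeval_X, aeval_X]
  cases v with
  | inl ℓ =>
    by_cases h : (ℓ : ℕ) < i
    · rw [substL_x, if_pos h, map_zero, substL_x, if_pos (by omega : (ℓ : ℕ) < i + 1)]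
    · rw [substL_x, if_neg h, phiL_X]
  | inr v' =>
    cases v' with
    | inl ℓ => rw [substL_y, map_zero, substL_y]
    | inr ℓ =>
      by_cases h : r + (ℓ : ℕ) < i
      · rw [substL_z, if_pos h, map_zero, substL_z, if_pos (by omega : r + (ℓ : ℕ) < i + 1)]
      · rw [substL_z, if_neg h, phiL_X]

lemma pL_mono (i : ℕ) : pL k r i ≤ pL k r (i + 1) := by
  intro f hf
  have hker : phiL k r i f = 0 := hf
  have := AlgHom.congr_fun (phiL_comp (k := k) (r := r) i) f
  rw [AlgHom.comp_apply, hker, map_zero] at this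
  exact (this.symm : phiL k r (i+1) f = 0)

lemma pL_mono' : Monotone (pL k r) := monotone_nat_of_le_succ pL_mono

lemma pL_strict (i : ℕ) (h : i < 2 * r) : pL k r i < pL k r (i + 1) := by
  refine lt_of_le_of_ne (pL_mono i) ?_
  intro heq
  by_cases h' : i < r
  · have h1 : (X (Sum.inl (⟨i, h'⟩ : Fin r)) :
        MvPolynomial (Fin r ⊕ (Fin r ⊕ Fin r)) k) ∈ pL k r (i + 1) := by
      show phiL k r (i + 1) (X (Sum.inl ⟨i, h'⟩)) = 0
      rw [phiL_X, substL_x,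
        if_pos (show ((⟨i, h'⟩ : Fin r) : ℕ) < i + 1 from Nat.lt_succ_self i)]
    have h2 : (X (Sum.inl (⟨i, h'⟩ : Fin r)) :
        MvPolynomial (Fin r ⊕ (Fin r ⊕ Fin r)) k) ∉ pL k r i := by
      show ¬ phiL k r i (X (Sum.inl ⟨i, h'⟩)) = 0
      rw [phiL_X, substL_x,
        if_neg (show ¬ ((⟨i, h'⟩ : Fin r) : ℕ) < i from Nat.lt_irrefl i)]
      exact X_ne_zero _
    rw [heq] at h2
    exact h2 h1
  · have hr' : i - r < r := by omega
    have h1 : (X (Sum.inr (Sum.inr (⟨i - r, hr'⟩ : Fin r))) :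
        MvPolynomial (Fin r ⊕ (Fin r ⊕ Fin r)) k) ∈ pL k r (i + 1) := by
      show phiL k r (i + 1) (X (Sum.inr (Sum.inr ⟨i - r, hr'⟩))) = 0
      rw [phiL_X, substL_z,
        if_pos (show r + ((⟨i - r, hr'⟩ : Fin r) : ℕ) < i + 1 by
          show r + (i - r) < i + 1
          omega)]
    have h2 : (X (Sum.inr (Sum.inr (⟨i - r, hr'⟩ : Fin r))) :
        MvPolynomial (Fin r ⊕ (Fin r ⊕ Fin r)) k) ∉ pL k r i := by
      show ¬ phiL k r i (X (Sum.inr (Sum.inr ⟨i - r, hr'⟩))) = 0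
      rw [phiL_X, substL_z,
        if_neg (show ¬ r + ((⟨i - r, hr'⟩ : Fin r) : ℕ) < i by
          show ¬ r + (i - r) < i
          omega)]
      exact X_ne_zero _
    rw [heq] at h2
    exact h2 h1

lemma I_le_pL0 : Iideal k r ≤ pL k r 0 := by
  rw [Iideal, Ideal.span_le]
  rintro f ⟨ℓ, ℓ', hlt, hf | hf⟩ <;>
  · subst hf
    show phiL k r 0 _ = 0
    rw [map_sub, map_mul, map_mul, phiL, aeval_X, aeval_X, aeval_X, aeval_X]
    simp [substL]

lemma I_le_pL (i : ℕ) : Iideal k r ≤ pL k r i :=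
  le_trans I_le_pL0 (pL_mono' (Nat.zero_le i))

lemma lower_bound : ((2 * r : ℕ) : WithBot ℕ∞) ≤ ringKrullDim (Cring ⧸ Iideal k r) := by
  haveI : ∀ i, ((pL k r i).map (Ideal.Quotient.mk (Iideal k r))).IsPrime := fun i => by
    haveI := pL_prime (k := k) (r := r) i
    refine Ideal.map_isPrime_of_surjective Ideal.Quotient.mk_surjective ?_
    rw [Ideal.mk_ker]
    exact I_le_pL i
  set series : LTSeries (PrimeSpectrum (Cring ⧸ Iideal k r)) :=
    ⟨2 * r, fun i => ⟨(pL k r i).map (Ideal.Quotient.mk (Iideal k r)), inferInstance⟩,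
      by
        intro i
        show (_ : PrimeSpectrum (Cring ⧸ Iideal k r)) < _
        rw [← PrimeSpectrum.asIdeal_lt_asIdeal]
        show (pL k r ↑i.castSucc).map _ < (pL k r ↑i.succ).map _
        have hv : (↑i.succ : ℕ) = ↑i.castSucc + 1 := by
          simp [Fin.val_succ, Fin.coe_castSucc]
        rw [hv]
        refine lt_of_le_of_ne (Ideal.map_mono (pL_mono _)) ?_
        intro heq
        have hcomap := congrArg (Ideal.comap (Ideal.Quotient.mk (Iideal k r))) heq
        rw [Ideal.comap_map_of_surjective _ Ideal.Quotient.mk_surjective,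
          Ideal.comap_map_of_surjective _ Ideal.Quotient.mk_surjective] at hcomap
        rw [← RingHom.ker_eq_comap_bot, Ideal.mk_ker] at hcomap
        rw [sup_eq_left.mpr (I_le_pL _), sup_eq_left.mpr (I_le_pL _)] at hcomap
        have hlt : (↑i.castSucc : ℕ) < 2 * r := by
          have := i.isLt
          simp only [Fin.coe_castSucc]
          omega
        exact absurd hcomap (ne_of_lt (pL_strict (↑i.castSucc) hlt))⟩
  have := Order.LTSeries.length_le_krullDim series
  rw [ringKrullDim]
  exact_mod_cast this

end Lower

/-- For `r ≥ 2`, the Krull dimension of `C_r/I_r` equals `2r`. -/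
theorem stmt_17 (k : Type*) [Field k] [IsAlgClosed k] (p : ℕ) (hp : p.Prime)
    (hp2 : 2 < p) [CharP k p] (r : ℕ) (hr : 2 ≤ r) :
    ringKrullDim (MvPolynomial (Fin r ⊕ (Fin r ⊕ Fin r)) k ⧸ Iideal k r) = (2 * r : ℕ) := by
  exact le_antisymm (upper_bound hr) lower_bound
end
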